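/- arXiv:2112.10631 — 3 statements merged into one kernel-verified Lean document; each statement's English description precedes it below -/
import Mathlib

section
/- Assume h satisfies the control condition: there exist K, γ₀ > 0 such that |d·h'(c·d)| ≤ K(h(d)+1) for all d > 0 and all c with |c−1| ≤ γ₀, and the growth conditions: there exist γ > 0, d₀ > 0, 0 < K₁ ≤ K₂ with K₁/d^{γ+2} ≤ h''(d) ≤ K₂/d^{γ+2} and K₁/d^{γ} ≤ h(d) ≤ K₂/d^{γ} for 0 < d ≤ d₀. Let r ∈ C²((0,1]) ∩ C([0,1]) with r'(R) > 0 solve the radial equilibrium equation with r(0) > 0, r(1) = λ, and δ bounded on (0,1]. Then the modified energy Î(r) := lim_{ε→0⁺} [ ∫_ε¹ R^{n−1} Φ(r'(R), r(R)/R,…,r(R)/R) dR − (κ(n−1)/n) r(ε)ⁿ ln(r(ε)/ε) ] exists, is finite, and equals (1/n)[ Φ(r'(1), λ, …, λ) − r'(1) Φ_{,1}(r(1)) + λⁿ T(r(1)) ] − (κ(n−1)/n²) r(0)ⁿ − (r(0)ⁿ/n) · lim_{ε→0⁺} [ T(r(ε)) + κ(n−1) ln(r(ε)/ε) ]. -/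
open Real MeasureTheory Filter Set
open scoped ENNReal NNReal

noncomputable section

/-- Radial stored energy `Φ(q, v, …, v) = (κ/n)(qⁿ + (n−1)vⁿ) + h(q v^{n−1})`,
the restriction of `Φ(v₁,…,vₙ) = (κ/n)(v₁ⁿ+⋯+vₙⁿ) + h(v₁⋯vₙ)` to points
`(q, v, …, v)`. -/
def Phi (n : ℕ) (κ : ℝ) (h : ℝ → ℝ) (q v : ℝ) : ℝ :=
  (κ / n) * (q ^ n + ((n : ℝ) - 1) * v ^ n) + h (q * v ^ (n - 1))

/-- `Φ_{,1}(q, v, …, v) = κ q^{n−1} + v^{n−1} h'(q v^{n−1})`. -/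
def Phi1 (n : ℕ) (κ : ℝ) (h' : ℝ → ℝ) (q v : ℝ) : ℝ :=
  κ * q ^ (n - 1) + v ^ (n - 1) * h' (q * v ^ (n - 1))

/-- `Φ_{,2}(q, v, …, v) = κ v^{n−1} + q v^{n−2} h'(q v^{n−1})`. -/
def Phi2 (n : ℕ) (κ : ℝ) (h' : ℝ → ℝ) (q v : ℝ) : ℝ :=
  κ * v ^ (n - 1) + q * v ^ (n - 2) * h' (q * v ^ (n - 1))

/-- Radial Cauchy stress `T(q,v) = v^{1−n} Φ_{,1}(q,v,…,v) = κ(q/v)^{n−1} + h'(q v^{n−1})`. -/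
def Tstress (n : ℕ) (κ : ℝ) (h' : ℝ → ℝ) (q v : ℝ) : ℝ :=
  κ * (q / v) ^ (n - 1) + h' (q * v ^ (n - 1))

/-- The determinant function `δ(R) = r'(R) (r(R)/R)^{n−1}`. -/
def del (n : ℕ) (r r' : ℝ → ℝ) (R : ℝ) : ℝ :=
  r' R * (r R / R) ^ (n - 1)

/-- Hypotheses on `h : (0,∞) → [0,∞)`: it is `C²` with derivative `h'` and second
derivative `h''`, `h'' > 0`, `h(d) → ∞` as `d → 0⁺`, `h(d)/d → ∞` as `d → ∞`,
`h'(d) → −∞` as `d → 0⁺` and `h'(d) → ∞` as `d → ∞`. -/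
structure GoodH (h h' h'' : ℝ → ℝ) : Prop where
  nonneg : ∀ d : ℝ, 0 < d → 0 ≤ h d
  deriv1 : ∀ d : ℝ, 0 < d → HasDerivAt h (h' d) d
  deriv2 : ∀ d : ℝ, 0 < d → HasDerivAt h' (h'' d) d
  cont2 : ContinuousOn h'' (Set.Ioi 0)
  hpp_pos : ∀ d : ℝ, 0 < d → 0 < h'' d
  lim_zero : Tendsto h (nhdsWithin 0 (Set.Ioi 0)) atTop
  lim_growth : Tendsto (fun d => h d / d) atTop atTop
  dlim_zero : Tendsto h' (nhdsWithin 0 (Set.Ioi 0)) atBot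
  dlim_top : Tendsto h' atTop atTop

/-- `r ∈ C²((0,1])`, with `r, r' > 0` on `(0,1]`, solving the radial equilibrium
equation `(d/dR)[R^{n−1} Φ_{,1}(r(R))] = (n−1) R^{n−2} Φ_{,2}(r(R))`. -/
structure RadialSol (n : ℕ) (κ : ℝ) (h' : ℝ → ℝ) (r r' r'' : ℝ → ℝ) : Prop where
  pos : ∀ R ∈ Set.Ioc (0:ℝ) 1, 0 < r R
  derivPos : ∀ R ∈ Set.Ioc (0:ℝ) 1, 0 < r' R
  hasDeriv : ∀ R ∈ Set.Ioc (0:ℝ) 1, HasDerivWithinAt r (r' R) (Set.Ioc 0 1) R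
  hasDeriv2 : ∀ R ∈ Set.Ioc (0:ℝ) 1, HasDerivWithinAt r' (r'' R) (Set.Ioc 0 1) R
  cont2 : ContinuousOn r'' (Set.Ioc 0 1)
  equil : ∀ R ∈ Set.Ioc (0:ℝ) 1,
    HasDerivWithinAt (fun s => s ^ (n - 1) * Phi1 n κ h' (r' s) (r s / s))
      (((n : ℝ) - 1) * R ^ (n - 2) * Phi2 n κ h' (r' R) (r R / R)) (Set.Ioc 0 1) R


-- auxiliary convexity lemma
lemma GoodH.h_le (h h' h'' : ℝ → ℝ) (hh : GoodH h h' h'') (b : ℝ) (hb : 0 < b) :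
    ∀ d : ℝ, 0 < d → d ≤ b → h d ≤ h b + b * |h' d| := by
  have hmono : StrictMonoOn h' (Set.Ioi 0) := by
    apply strictMonoOn_of_deriv_pos (convex_Ioi 0)
    · exact fun x hx => (hh.deriv2 x hx).differentiableAt.continuousAt.continuousWithinAt
    · intro x hx
      rw [interior_Ioi] at hx
      rw [(hh.deriv2 x hx).deriv]
      exact hh.hpp_pos x hx
  intro d hd hdb
  rcases eq_or_lt_of_le hdb with rfl | hlt
  · nlinarith [abs_nonneg (h' d)]
  · obtain ⟨ξ, hξ, hslope⟩ := exists_hasDerivAt_eq_slope h h' hlt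
      (fun x hx => (hh.deriv1 x (lt_of_lt_of_le hd hx.1)).differentiableAt.continuousAt.continuousWithinAt)
      (fun x hx => hh.deriv1 x (hd.trans hx.1))
    have h1 : h' d ≤ h' ξ := (hmono hd (hd.trans hξ.1) hξ.1).le
    have h2 : h b - h d = h' ξ * (b - d) := by
      have hbd : b - d ≠ 0 := sub_ne_zero.mpr hlt.ne'
      rw [eq_div_iff hbd] at hslope
      linarith [hslope]
    nlinarith [neg_abs_le (h' d), abs_nonneg (h' d)]


set_option maxHeartbeats 1600000 in
/-- for a cavitating solution, the modified energy
`Î(r) = lim_{ε→0⁺} [∫_ε¹ R^{n−1}Φ dR − (κ(n−1)/n) r(ε)ⁿ ln(r(ε)/ε)]` exists, is finite,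
and is given by the stated boundary-term formula. -/
theorem stmt8 (n : ℕ) (hn : 2 ≤ n) (κ : ℝ) (hκ : 0 < κ)
    (h h' h'' : ℝ → ℝ) (hh : GoodH h h' h'')
    (r r' r'' : ℝ → ℝ) (hr : RadialSol n κ h' r r' r'')
    (K γ₀ : ℝ) (hK : 0 < K) (hγ₀ : 0 < γ₀)
    (hctrl : ∀ d : ℝ, 0 < d → ∀ c : ℝ, |c - 1| ≤ γ₀ → |d * h' (c * d)| ≤ K * (h d + 1))
    (γ d₀ K₁ K₂ : ℝ) (hγ : 0 < γ) (hd₀ : 0 < d₀) (hK₁ : 0 < K₁) (hK₁₂ : K₁ ≤ K₂)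
    (hpp_bound : ∀ d : ℝ, 0 < d → d ≤ d₀ →
      K₁ / d ^ (γ + 2) ≤ h'' d ∧ h'' d ≤ K₂ / d ^ (γ + 2))
    (h_bound : ∀ d : ℝ, 0 < d → d ≤ d₀ → K₁ / d ^ γ ≤ h d ∧ h d ≤ K₂ / d ^ γ)
    (lam : ℝ)
    (hcont : ContinuousOn r (Set.Icc 0 1)) (hcav : 0 < r 0)
    (hbdd : ∃ M : ℝ, ∀ R ∈ Set.Ioc (0:ℝ) 1, del n r r' R ≤ M)
    (hbc : r 1 = lam) :
    ∃ Tlim I₀ : ℝ,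
      Tendsto (fun ε => Tstress n κ h' (r' ε) (r ε / ε)
          + κ * ((n:ℝ) - 1) * Real.log (r ε / ε)) (nhdsWithin 0 (Set.Ioi 0)) (nhds Tlim) ∧
      Tendsto (fun ε => (∫ R in Set.Ioc ε 1, R ^ (n - 1) * Phi n κ h (r' R) (r R / R))
          - κ * ((n:ℝ) - 1) / n * (r ε) ^ n * Real.log (r ε / ε))
        (nhdsWithin 0 (Set.Ioi 0)) (nhds I₀) ∧
      I₀ = (1 / n) * (Phi n κ h (r' 1) lam - r' 1 * Phi1 n κ h' (r' 1) lam
              + lam ^ n * Tstress n κ h' (r' 1) lam)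
            - κ * ((n:ℝ) - 1) / ((n:ℝ) ^ 2) * (r 0) ^ n - (r 0) ^ n / n * Tlim := by
  obtain ⟨m, rfl⟩ : ∃ m, n = m + 2 := ⟨n - 2, by omega⟩
  clear hn hK hγ₀ hctrl hγ hd₀ hK₁ hK₁₂ hpp_bound h_bound
  obtain ⟨M, hM⟩ := hbdd
  have hM' : ∀ R ∈ Set.Ioc (0:ℝ) 1, r' R * (r R / R) ^ (m+1) ≤ M := by
    intro R hR
    have := hM R hR
    simpa [del] using this
  have hnR : ((m:ℝ) + 2) ≠ 0 := by positivity
  have h1S : (1:ℝ) ∈ Set.Ioc (0:ℝ) 1 := ⟨one_pos, le_refl 1⟩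
  have hr1 : 0 < r 1 := hr.pos 1 h1S
  have hlam : 0 < lam := hbc ▸ hr1
  have hρ0 : 0 < r 0 := hcav
  -- strict monotonicity of r
  have hmono : StrictMonoOn r (Set.Icc 0 1) := by
    apply strictMonoOn_of_deriv_pos (convex_Icc 0 1) hcont
    intro x hx
    rw [interior_Icc] at hx
    have hx' : x ∈ Set.Ioc (0:ℝ) 1 := ⟨hx.1, hx.2.le⟩
    rw [((hr.hasDeriv x hx').hasDerivAt (Ioc_mem_nhds hx.1 hx.2)).deriv]
    exact hr.derivPos x hx'
  have hrlb : ∀ R ∈ Set.Ioc (0:ℝ) 1, r 0 ≤ r R := fun R hR =>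
    (hmono ⟨le_refl 0, zero_le_one⟩ ⟨hR.1.le, hR.2⟩ hR.1).le
  have hδpos : ∀ R ∈ Set.Ioc (0:ℝ) 1, 0 < r' R * (r R / R) ^ (m+1) := fun R hR =>
    mul_pos (hr.derivPos R hR) (pow_pos (div_pos (hr.pos R hR) hR.1) _)
  have hMpos : 0 < M := lt_of_lt_of_le (hδpos 1 h1S) (hM' 1 h1S)
  -- bound on r'
  have hvlb : ∀ R ∈ Set.Ioc (0:ℝ) 1, r 0 ≤ r R / R := by
    intro R hR
    rw [le_div_iff₀ hR.1]
    nlinarith [hrlb R hR, hρ0, hR.2, hR.1]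
  have hr'le : ∀ R ∈ Set.Ioc (0:ℝ) 1, r' R ≤ M / r 0 ^ (m+1) := by
    intro R hR
    rw [le_div_iff₀ (pow_pos hρ0 _)]
    calc r' R * r 0 ^ (m+1) ≤ r' R * (r R / R) ^ (m+1) := by
          have := pow_le_pow_left₀ hρ0.le (hvlb R hR) (m+1)
          nlinarith [(hr.derivPos R hR)]
      _ ≤ M := hM' R hR
  set c₂ : ℝ := M / r 0 ^ (m+1) with hc₂def
  have hc₂pos : 0 < c₂ := div_pos hMpos (pow_pos hρ0 _)
  set c₁ : ℝ := c₂ / r 0 with hc₁def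
  have hc₁pos : 0 < c₁ := div_pos hc₂pos hρ0
  have hwpos : ∀ R ∈ Set.Ioc (0:ℝ) 1, 0 < R * r' R / r R := fun R hR =>
    div_pos (mul_pos hR.1 (hr.derivPos R hR)) (hr.pos R hR)
  have hwle : ∀ R ∈ Set.Ioc (0:ℝ) 1, R * r' R / r R ≤ c₁ := by
    intro R hR
    apply div_le_div₀ hc₂pos.le _ hρ0 (hrlb R hR)
    calc R * r' R ≤ 1 * r' R := by nlinarith [hr.derivPos R hR, hR.2]
      _ = r' R := one_mul _
      _ ≤ c₂ := hr'le R hR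
  -- continuity facts
  have hcr : ContinuousOn r (Set.Ioc 0 1) := fun R hR => (hr.hasDeriv R hR).continuousWithinAt
  have hcr' : ContinuousOn r' (Set.Ioc 0 1) := fun R hR => (hr.hasDeriv2 R hR).continuousWithinAt
  have hrne : ∀ R ∈ Set.Ioc (0:ℝ) 1, r R ≠ 0 := fun R hR => (hr.pos R hR).ne'
  have hRne : ∀ R ∈ Set.Ioc (0:ℝ) 1, R ≠ 0 := fun R hR => hR.1.ne'
  have hcv : ContinuousOn (fun R => r R / R) (Set.Ioc 0 1) := hcr.div continuousOn_id hRne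
  have hcδ : ContinuousOn (fun R => r' R * (r R / R) ^ (m+1)) (Set.Ioc 0 1) := hcr'.mul (hcv.pow _)
  have hch : ContinuousOn h (Set.Ioi 0) := fun d hd => (hh.deriv1 d hd).continuousAt.continuousWithinAt
  have hch' : ContinuousOn h' (Set.Ioi 0) := fun d hd => (hh.deriv2 d hd).continuousAt.continuousWithinAt
  have hmaps : MapsTo (fun R => r' R * (r R / R) ^ (m+1)) (Set.Ioc 0 1) (Set.Ioi 0) :=
    fun R hR => hδpos R hR
  have hchδ : ContinuousOn (fun R => h (r' R * (r R / R) ^ (m+1))) (Set.Ioc 0 1) := hch.comp hcδ hmaps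
  have hchδ' : ContinuousOn (fun R => h' (r' R * (r R / R) ^ (m+1))) (Set.Ioc 0 1) := hch'.comp hcδ hmaps
  have hcPhi : ContinuousOn (fun R => Phi (m+2) κ h (r' R) (r R / R)) (Set.Ioc 0 1) := by
    simp only [Phi, show m+2-1 = m+1 from rfl]
    exact (continuousOn_const.mul ((hcr'.pow _).add (continuousOn_const.mul (hcv.pow _)))).add hchδ
  have hcPhi1 : ContinuousOn (fun R => Phi1 (m+2) κ h' (r' R) (r R / R)) (Set.Ioc 0 1) := by
    simp only [Phi1, show m+2-1 = m+1 from rfl]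
    exact (continuousOn_const.mul (hcr'.pow _)).add ((hcv.pow _).mul hchδ')
  have hcf : ContinuousOn (fun R => R ^ (m+1) * Phi (m+2) κ h (r' R) (r R / R)) (Set.Ioc 0 1) :=
    (continuous_pow (m+1)).continuousOn.mul hcPhi
  -- the exact antiderivative G
  set Gfun : ℝ → ℝ := fun s => (s ^ (m+2) * Phi (m+2) κ h (r' s) (r s / s)
      + (r s - s * r' s) * (s ^ (m+2-1) * Phi1 (m+2) κ h' (r' s) (r s / s))) / ((m:ℝ) + 2)
    with hGdef
  have hG : ∀ R ∈ Set.Ioc (0:ℝ) 1, HasDerivWithinAt Gfun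
      (R ^ (m+1) * Phi (m+2) κ h (r' R) (r R / R)) (Set.Ioc 0 1) R := by
    intro R hR
    have hRne' : R ≠ 0 := hR.1.ne'
    have hrpos := hr.pos R hR
    have hv : HasDerivWithinAt (fun s => r s / s) ((r' R * R - r R * 1) / R ^ 2)
        (Set.Ioc 0 1) R := (hr.hasDeriv R hR).div (hasDerivWithinAt_id R _) hRne'
    have hδd : HasDerivWithinAt (fun s => r' s * (r s / s) ^ (m+1))
        (r'' R * (r R / R) ^ (m+1)
          + r' R * (((m+1:ℕ):ℝ) * (r R / R) ^ m * ((r' R * R - r R * 1) / R ^ 2)))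
        (Set.Ioc 0 1) R := (hr.hasDeriv2 R hR).mul (hv.pow (m+1))
    have hhd := (hh.deriv1 _ (hδpos R hR)).comp_hasDerivWithinAt R hδd
    have hq : HasDerivWithinAt (fun s => (r' s) ^ (m+2))
        (((m+2:ℕ):ℝ) * (r' R) ^ (m+1) * r'' R) (Set.Ioc 0 1) R := (hr.hasDeriv2 R hR).pow (m+2)
    have hvp : HasDerivWithinAt (fun s => (r s / s) ^ (m+2))
        (((m+2:ℕ):ℝ) * (r R / R) ^ (m+1) * ((r' R * R - r R * 1) / R ^ 2))
        (Set.Ioc 0 1) R := hv.pow (m+2)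
    have hPhiD : HasDerivWithinAt (fun s => Phi (m+2) κ h (r' s) (r s / s))
        ((κ / ((m+2:ℕ):ℝ)) * (((m+2:ℕ):ℝ) * (r' R) ^ (m+1) * r'' R
            + (((m+2:ℕ):ℝ) - 1) * (((m+2:ℕ):ℝ) * (r R / R) ^ (m+1) * ((r' R * R - r R * 1) / R ^ 2)))
          + h' (r' R * (r R / R) ^ (m+1)) * (r'' R * (r R / R) ^ (m+1)
            + r' R * (((m+1:ℕ):ℝ) * (r R / R) ^ m * ((r' R * R - r R * 1) / R ^ 2))))
        (Set.Ioc 0 1) R := by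
      have hbuilt := ((hq.add (hvp.const_mul (((m+2:ℕ):ℝ) - 1))).const_mul (κ / ((m+2:ℕ):ℝ))).add hhd
      apply hbuilt.congr
      · intro y hy
        simp [Phi, Function.comp, show m+2-1 = m+1 from rfl]
      · simp [Phi, Function.comp, show m+2-1 = m+1 from rfl]
    have hpow : HasDerivWithinAt (fun s : ℝ => s ^ (m+2)) (((m+2:ℕ):ℝ) * R ^ (m+1) * 1)
        (Set.Ioc 0 1) R := (hasDerivWithinAt_id R _).pow (m+2)
    have hlin : HasDerivWithinAt (fun s => r s - s * r' s) (r' R - (1 * r' R + R * r'' R))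
        (Set.Ioc 0 1) R := (hr.hasDeriv R hR).sub ((hasDerivWithinAt_id R _).mul (hr.hasDeriv2 R hR))
    have hbig := ((hpow.mul hPhiD).add (hlin.mul (hr.equil R hR))).div_const ((m:ℝ) + 2)
    refine hbig.congr_deriv ?_
    simp only [Phi, Phi1, Phi2, show m+2-1 = m+1 from rfl, show m+2-2 = m from rfl]
    generalize h' (r' R * (r R / R) ^ (m+1)) = X
    generalize h (r' R * (r R / R) ^ (m+1)) = Y
    push_cast
    field_simp
    ring
  have hGc : ContinuousOn Gfun (Set.Ioc 0 1) := fun R hR => (hG R hR).continuousWithinAt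
  -- FTC for the energy integral
  have hInt : ∀ ε ∈ Set.Ioo (0:ℝ) 1,
      (∫ R in Set.Ioc ε 1, R ^ (m+1) * Phi (m+2) κ h (r' R) (r R / R)) = Gfun 1 - Gfun ε := by
    intro ε hε
    have hsub : Set.Icc ε 1 ⊆ Set.Ioc 0 1 := fun x hx => ⟨lt_of_lt_of_le hε.1 hx.1, hx.2⟩
    rw [← intervalIntegral.integral_of_le hε.2.le]
    apply intervalIntegral.integral_eq_sub_of_hasDeriv_right_of_le hε.2.le (hGc.mono hsub)
    · intro x hx
      have hx' : x ∈ Set.Ioc (0:ℝ) 1 := ⟨hε.1.trans hx.1, hx.2.le⟩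
      exact ((hG x hx').hasDerivAt (Ioc_mem_nhds (hε.1.trans hx.1) hx.2)).hasDerivWithinAt
    · rw [intervalIntegrable_iff_integrableOn_Icc_of_le hε.2.le]
      exact (hcf.mono hsub).integrableOn_compact isCompact_Icc
  -- the stress-plus-log function g and its derivative
  set g : ℝ → ℝ := fun ε => Tstress (m+2) κ h' (r' ε) (r ε / ε)
      + κ * (((m+2:ℕ):ℝ) - 1) * Real.log (r ε / ε) with hgdef
  set gd : ℝ → ℝ := fun R => κ * (((m+2:ℕ):ℝ) - 1) * (r' R / r R)
      * (1 - (R * r' R / r R) ^ (m+1)) with hgddef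
  have hTP : ∀ R ∈ Set.Ioc (0:ℝ) 1, Tstress (m+2) κ h' (r' R) (r R / R)
      = (R ^ (m+2-1) * Phi1 (m+2) κ h' (r' R) (r R / R)) / (r R) ^ (m+1) := by
    intro R hR
    have hRne' : R ≠ 0 := hR.1.ne'
    have hrne' : r R ≠ 0 := (hr.pos R hR).ne'
    simp only [Tstress, Phi1, show m+2-1 = m+1 from rfl]
    rw [div_div_eq_mul_div, div_pow, div_pow]
    field_simp
    ring
  have hg : ∀ R ∈ Set.Ioc (0:ℝ) 1, HasDerivWithinAt g (gd R) (Set.Ioc 0 1) R := by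
    intro R hR
    have hRne' : R ≠ 0 := hR.1.ne'
    have hrpos := hr.pos R hR
    have hvpos : 0 < r R / R := div_pos hrpos hR.1
    have hv : HasDerivWithinAt (fun s => r s / s) ((r' R * R - r R * 1) / R ^ 2)
        (Set.Ioc 0 1) R := (hr.hasDeriv R hR).div (hasDerivWithinAt_id R _) hRne'
    have hlog := hv.log hvpos.ne'
    have hT : HasDerivWithinAt
        (fun s => (s ^ (m+2-1) * Phi1 (m+2) κ h' (r' s) (r s / s)) / (r s) ^ (m+1))
        (((((m+2:ℕ):ℝ) - 1) * R ^ (m+2-2) * Phi2 (m+2) κ h' (r' R) (r R / R) * (r R) ^ (m+1)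
          - (R ^ (m+2-1) * Phi1 (m+2) κ h' (r' R) (r R / R)) * (((m+1:ℕ):ℝ) * (r R) ^ m * r' R))
          / ((r R) ^ (m+1)) ^ 2)
        (Set.Ioc 0 1) R :=
      (hr.equil R hR).div ((hr.hasDeriv R hR).pow (m+1)) (pow_ne_zero _ hrpos.ne')
    have hgt := hT.add ((hlog.const_mul (κ * (((m+2:ℕ):ℝ) - 1))))
    have heq : ∀ y ∈ Set.Ioc (0:ℝ) 1, g y
        = (y ^ (m+2-1) * Phi1 (m+2) κ h' (r' y) (r y / y)) / (r y) ^ (m+1)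
          + κ * (((m+2:ℕ):ℝ) - 1) * Real.log (r y / y) := by
      intro y hy
      rw [hgdef]
      simp only
      rw [hTP y hy]
    have hmain : HasDerivWithinAt g
        (((((m+2:ℕ):ℝ) - 1) * R ^ (m+2-2) * Phi2 (m+2) κ h' (r' R) (r R / R) * (r R) ^ (m+1)
          - (R ^ (m+2-1) * Phi1 (m+2) κ h' (r' R) (r R / R)) * (((m+1:ℕ):ℝ) * (r R) ^ m * r' R))
          / ((r R) ^ (m+1)) ^ 2
          + κ * (((m+2:ℕ):ℝ) - 1) * (((r' R * R - r R * 1) / R ^ 2) / (r R / R)))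
        (Set.Ioc 0 1) R := by
      apply HasDerivWithinAt.congr hgt heq (heq R hR)
    convert hmain using 1
    have hRne2 : R ≠ 0 := hR.1.ne'
    have hrne2 : r R ≠ 0 := hrpos.ne'
    rw [hgddef]
    simp only [Phi1, Phi2, show m+2-1 = m+1 from rfl, show m+2-2 = m from rfl]
    generalize h' (r' R * (r R / R) ^ (m+1)) = X
    rw [div_div_eq_mul_div]
    push_cast
    simp only [div_pow]
    field_simp
    ring
  have hgc : ContinuousOn g (Set.Ioc 0 1) := fun R hR => (hg R hR).continuousWithinAt
  -- bound on gd
  set B : ℝ := κ * ((m:ℝ) + 1) * (c₂ / r 0) * (1 + c₁ ^ (m+1)) with hBdef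
  have hBpos : 0 < B := by positivity
  have hgdb : ∀ R ∈ Set.Ioc (0:ℝ) 1, |gd R| ≤ B := by
    intro R hR
    have hrpos := hr.pos R hR
    have h1 : 0 ≤ r' R / r R := (div_pos (hr.derivPos R hR) hrpos).le
    have h2 : r' R / r R ≤ c₂ / r 0 := div_le_div₀ hc₂pos.le (hr'le R hR) hρ0 (hrlb R hR)
    have h3 : (0:ℝ) ≤ (R * r' R / r R) ^ (m+1) := (pow_pos (hwpos R hR) _).le
    have h4 : (R * r' R / r R) ^ (m+1) ≤ c₁ ^ (m+1) := pow_le_pow_left₀ (hwpos R hR).le (hwle R hR) _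
    have h5 : |1 - (R * r' R / r R) ^ (m+1)| ≤ 1 + c₁ ^ (m+1) := by
      rw [abs_le]; constructor <;> nlinarith
    rw [hgddef]
    simp only
    rw [abs_mul, abs_mul]
    have hκpos : (0:ℝ) < κ * (((m+2:ℕ):ℝ) - 1) := by
      have hc : (2:ℝ) ≤ ((m+2:ℕ):ℝ) := by
        exact_mod_cast (by omega : 2 ≤ m + 2)
      exact mul_pos hκ (by linarith)
    have hκm : |κ * (((m+2:ℕ):ℝ) - 1)| = κ * ((m:ℝ) + 1) := by
      rw [abs_of_pos hκpos]; push_cast; ring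
    rw [hκm, abs_of_nonneg h1]
    have hb1 : κ * ((m:ℝ) + 1) * (r' R / r R) ≤ κ * ((m:ℝ) + 1) * (c₂ / r 0) :=
      mul_le_mul_of_nonneg_left h2 (by positivity)
    have hfin := mul_le_mul hb1 h5 (abs_nonneg _) (by positivity)
    rw [hBdef]
    exact hfin
  have hgdc : ContinuousOn gd (Set.Ioc 0 1) := by
    apply ContinuousOn.mul
    · exact continuousOn_const.mul (hcr'.div hcr hrne)
    · apply continuousOn_const.sub
      exact (((continuousOn_id.mul hcr').div hcr hrne).pow _)
  have hgdi : IntegrableOn gd (Set.Ioc 0 1) := by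
    apply Integrable.mono' (g := fun _ => B)
    · exact integrableOn_const (by rw [Real.volume_Ioc]; exact ENNReal.ofReal_ne_top)
    · exact (hgdc.aestronglyMeasurable measurableSet_Ioc)
    · rw [ae_restrict_iff' measurableSet_Ioc]
      exact Filter.Eventually.of_forall (fun x hx => hgdb x hx)
  set J : ℝ := ∫ x in Set.Ioc (0:ℝ) 1, gd x with hJdef
  -- FTC for g
  have hgInt : ∀ ε ∈ Set.Ioo (0:ℝ) 1, (∫ x in Set.Ioc ε 1, gd x) = g 1 - g ε := by
    intro ε hε
    have hsub : Set.Icc ε 1 ⊆ Set.Ioc 0 1 := fun x hx => ⟨lt_of_lt_of_le hε.1 hx.1, hx.2⟩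
    rw [← intervalIntegral.integral_of_le hε.2.le]
    apply intervalIntegral.integral_eq_sub_of_hasDeriv_right_of_le hε.2.le (hgc.mono hsub)
    · intro x hx
      have hx' : x ∈ Set.Ioc (0:ℝ) 1 := ⟨hε.1.trans hx.1, hx.2.le⟩
      exact ((hg x hx').hasDerivAt (Ioc_mem_nhds (hε.1.trans hx.1) hx.2)).hasDerivWithinAt
    · rw [intervalIntegrable_iff_integrableOn_Icc_of_le hε.2.le]
      exact (hgdc.mono hsub).integrableOn_compact isCompact_Icc
  -- the limit of g
  have hIoo : Set.Ioo (0:ℝ) 1 ∈ nhdsWithin (0:ℝ) (Set.Ioi 0) :=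
    Ioo_mem_nhdsGT one_pos
  have hsplit : ∀ ε ∈ Set.Ioo (0:ℝ) 1, g ε - (g 1 - J) = ∫ x in Set.Ioc (0:ℝ) ε, gd x := by
    intro ε hε
    have hd : Disjoint (Set.Ioc (0:ℝ) ε) (Set.Ioc ε 1) := Set.Ioc_disjoint_Ioc_of_le le_rfl
    have hu : Set.Ioc (0:ℝ) ε ∪ Set.Ioc ε 1 = Set.Ioc (0:ℝ) 1 := Set.Ioc_union_Ioc_eq_Ioc hε.1.le hε.2.le
    have : J = (∫ x in Set.Ioc (0:ℝ) ε, gd x) + ∫ x in Set.Ioc ε 1, gd x := by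
      rw [hJdef, ← hu]
      exact setIntegral_union hd measurableSet_Ioc
        (hgdi.mono_set (by rw [← hu]; exact Set.subset_union_left))
        (hgdi.mono_set (by rw [← hu]; exact Set.subset_union_right))
    rw [this, hgInt ε hε]
    ring
  have hgl : Tendsto g (nhdsWithin 0 (Set.Ioi 0)) (nhds (g 1 - J)) := by
    rw [← tendsto_sub_nhds_zero_iff]
    apply squeeze_zero_norm' (a := fun ε => B * ε)
    · filter_upwards [hIoo] with ε hε
      rw [hsplit ε hε]
      have : ‖∫ x in Set.Ioc (0:ℝ) ε, gd x‖ ≤ B * (volume (Set.Ioc (0:ℝ) ε)).toReal := by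
        apply norm_setIntegral_le_of_norm_le_const
        · rw [Real.volume_Ioc]; exact ENNReal.ofReal_lt_top
        · intro x hx
          exact hgdb x ⟨hx.1, hx.2.trans hε.2.le⟩
      rwa [Real.volume_Ioc, sub_zero, ENNReal.toReal_ofReal hε.1.le] at this
    · have : Tendsto (fun ε : ℝ => B * ε) (nhdsWithin 0 (Set.Ioi 0)) (nhds (B * 0)) :=
        (tendsto_id.const_mul B).mono_left nhdsWithin_le_nhds
      simpa using this
  -- elementary limits
  have l0 : Tendsto (fun ε : ℝ => ε) (nhdsWithin 0 (Set.Ioi 0)) (nhds 0) :=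
    tendsto_id.mono_left nhdsWithin_le_nhds
  have l1 : Tendsto (fun ε => ε * r' ε) (nhdsWithin 0 (Set.Ioi 0)) (nhds 0) := by
    apply squeeze_zero_norm' (a := fun ε => c₂ * ε)
    · filter_upwards [hIoo] with ε hε
      have hε' : ε ∈ Set.Ioc (0:ℝ) 1 := ⟨hε.1, hε.2.le⟩
      rw [Real.norm_eq_abs, abs_of_pos (mul_pos hε.1 (hr.derivPos ε hε'))]
      calc ε * r' ε ≤ ε * c₂ := by nlinarith [hr'le ε hε', hε.1]
        _ = c₂ * ε := mul_comm _ _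
    · have := (tendsto_id.const_mul c₂).mono_left
        (nhdsWithin_le_nhds (s := Set.Ioi (0:ℝ)) (a := (0:ℝ)))
      simpa using this
  have l2 : Tendsto (fun ε => (ε * r' ε) ^ (m+2)) (nhdsWithin 0 (Set.Ioi 0)) (nhds 0) := by
    have := l1.pow (m+2)
    simpa [zero_pow] using this
  have l3 : Tendsto r (nhdsWithin 0 (Set.Ioi 0)) (nhds (r 0)) := by
    have h0 : ContinuousWithinAt r (Set.Icc 0 1) 0 := hcont 0 ⟨le_refl 0, zero_le_one⟩
    apply h0.tendsto.mono_left
    rw [← nhdsWithin_Ioc_eq_nhdsGT one_pos]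
    exact nhdsWithin_mono 0 Set.Ioc_subset_Icc_self
  have l4a : Tendsto (fun ε : ℝ => ε ^ (m+2)) (nhdsWithin 0 (Set.Ioi 0)) (nhds 0) := by
    have := l0.pow (m+2)
    simpa [zero_pow] using this
  have l4b : Tendsto (fun ε : ℝ => ε ^ (m+2) * Real.log ε) (nhdsWithin 0 (Set.Ioi 0)) (nhds 0) := by
    have lA : Tendsto (fun x : ℝ => Real.log x * x) (nhdsWithin 0 (Set.Ioi 0)) (nhds 0) := by
      have h01 : (0:ℝ) < 1 := one_pos
      have := tendsto_log_mul_rpow_nhdsGT_zero h01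
      simpa [Real.rpow_one] using this
    have := (l0.pow (m+1)).mul lA
    rw [zero_pow (by omega), zero_mul] at this
    apply this.congr
    intro x; ring
  have l4c : Tendsto (fun ε : ℝ => ε ^ (m+2) * Real.log (r ε)) (nhdsWithin 0 (Set.Ioi 0)) (nhds 0) := by
    have hlog : Tendsto (fun ε => Real.log (r ε)) (nhdsWithin 0 (Set.Ioi 0)) (nhds (Real.log (r 0))) :=
      ((Real.continuousAt_log hρ0.ne').tendsto.comp l3)
    have := l4a.mul hlog
    simpa using this
  have l4d : Tendsto (fun ε : ℝ => ε ^ (m+2) * g ε) (nhdsWithin 0 (Set.Ioi 0)) (nhds 0) := by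
    have := l4a.mul hgl
    simpa using this
  have l4e : Tendsto (fun ε : ℝ => ε ^ (m+2) * (r' ε / (r ε / ε)) ^ (m+1))
      (nhdsWithin 0 (Set.Ioi 0)) (nhds 0) := by
    apply squeeze_zero_norm' (a := fun ε => c₁ ^ (m+1) * ε ^ (m+2))
    · filter_upwards [hIoo] with ε hε
      have hε' : ε ∈ Set.Ioc (0:ℝ) 1 := ⟨hε.1, hε.2.le⟩
      have hεne : ε ≠ 0 := hε.1.ne'
      have hrne' : r ε ≠ 0 := (hr.pos ε hε').ne'
      have hw : r' ε / (r ε / ε) = ε * r' ε / r ε := by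
        rw [div_div_eq_mul_div]
        ring
      rw [Real.norm_eq_abs, hw, abs_of_nonneg
        (mul_nonneg (pow_nonneg hε.1.le _) (pow_nonneg (hwpos ε hε').le _))]
      have h4 : (ε * r' ε / r ε) ^ (m+1) ≤ c₁ ^ (m+1) :=
        pow_le_pow_left₀ (hwpos ε hε').le (hwle ε hε') _
      nlinarith [pow_pos hε.1 (m+2), pow_le_pow_left₀ hε.1.le hε.2.le (m+2),
        (hwpos ε hε').le, pow_pos (hwpos ε hε') (m+1)]
    · have := l4a.const_mul (c₁ ^ (m+1))
      simpa using this
  have l5 : Tendsto (fun ε : ℝ => ε ^ (m+2) * h' (r' ε * (r ε / ε) ^ (m+1)))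
      (nhdsWithin 0 (Set.Ioi 0)) (nhds 0) := by
    have hcomb := (l4d.sub ((l4c.sub l4b).const_mul (κ * (((m+2:ℕ):ℝ) - 1)))).sub (l4e.const_mul κ)
    rw [show (0:ℝ) - κ * (((m+2:ℕ):ℝ) - 1) * (0 - 0) - κ * 0 = 0 by ring] at hcomb
    apply hcomb.congr'
    filter_upwards [hIoo] with ε hε
    have hε' : ε ∈ Set.Ioc (0:ℝ) 1 := ⟨hε.1, hε.2.le⟩
    have hrpos := hr.pos ε hε'
    rw [hgdef]
    simp only [Tstress, show m+2-1 = m+1 from rfl]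
    rw [Real.log_div hrpos.ne' hε.1.ne']
    ring
  have l6 : Tendsto (fun ε : ℝ => ε ^ (m+2) * (r' ε * (r ε / ε) ^ (m+1)
      * h' (r' ε * (r ε / ε) ^ (m+1)))) (nhdsWithin 0 (Set.Ioi 0)) (nhds 0) := by
    apply squeeze_zero_norm' (a := fun ε => M * ‖ε ^ (m+2) * h' (r' ε * (r ε / ε) ^ (m+1))‖)
    · filter_upwards [hIoo] with ε hε
      have hε' : ε ∈ Set.Ioc (0:ℝ) 1 := ⟨hε.1, hε.2.le⟩
      have hδp := hδpos ε hε'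
      have : ε ^ (m+2) * (r' ε * (r ε / ε) ^ (m+1) * h' (r' ε * (r ε / ε) ^ (m+1)))
          = (r' ε * (r ε / ε) ^ (m+1)) * (ε ^ (m+2) * h' (r' ε * (r ε / ε) ^ (m+1))) := by ring
      rw [this, norm_mul, Real.norm_eq_abs (r' ε * (r ε / ε) ^ (m+1)), abs_of_pos hδp]
      exact mul_le_mul_of_nonneg_right (hM' ε hε') (norm_nonneg _)
    · have := (l5.norm).const_mul M
      simpa using this
  have l7 : Tendsto (fun ε : ℝ => ε ^ (m+2) * h (r' ε * (r ε / ε) ^ (m+1)))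
      (nhdsWithin 0 (Set.Ioi 0)) (nhds 0) := by
    set b₀ : ℝ := max M 1 with hb₀def
    have hb₀pos : 0 < b₀ := lt_of_lt_of_le one_pos (le_max_right _ _)
    have hupper : Tendsto (fun ε : ℝ => ε ^ (m+2) * h b₀
        + b₀ * ‖ε ^ (m+2) * h' (r' ε * (r ε / ε) ^ (m+1))‖)
        (nhdsWithin 0 (Set.Ioi 0)) (nhds 0) := by
      have := (l4a.mul_const (h b₀)).add ((l5.norm).const_mul b₀)
      simpa using this
    apply tendsto_of_tendsto_of_tendsto_of_le_of_le' tendsto_const_nhds hupper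
    · filter_upwards [hIoo] with ε hε
      have hε' : ε ∈ Set.Ioc (0:ℝ) 1 := ⟨hε.1, hε.2.le⟩
      have := hh.nonneg _ (hδpos ε hε')
      exact mul_nonneg (pow_nonneg hε.1.le _) this
    · filter_upwards [hIoo] with ε hε
      have hε' : ε ∈ Set.Ioc (0:ℝ) 1 := ⟨hε.1, hε.2.le⟩
      have hδp := hδpos ε hε'
      have hδb : r' ε * (r ε / ε) ^ (m+1) ≤ b₀ := le_trans (hM' ε hε') (le_max_left _ _)
      have hconv := GoodH.h_le h h' h'' hh b₀ hb₀pos _ hδp hδb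
      have hεp : (0:ℝ) < ε ^ (m+2) := pow_pos hε.1 _
      have habs : ε ^ (m+2) * |h' (r' ε * (r ε / ε) ^ (m+1))|
          = ‖ε ^ (m+2) * h' (r' ε * (r ε / ε) ^ (m+1))‖ := by
        rw [norm_mul, Real.norm_eq_abs, Real.norm_eq_abs, abs_of_pos hεp]
      nlinarith [abs_nonneg (h' (r' ε * (r ε / ε) ^ (m+1)))]
  -- the limit of the modified energy
  set Q : ℝ → ℝ := fun ε => (ε ^ (m+2) * Phi (m+2) κ h (r' ε) (r ε / ε)
      - ε ^ (m+2) * r' ε * Phi1 (m+2) κ h' (r' ε) (r ε / ε)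
      + r ε ^ (m+2) * g ε) / ((m:ℝ) + 2) with hQdef
  have t1 : Tendsto (fun ε => ε ^ (m+2) * Phi (m+2) κ h (r' ε) (r ε / ε))
      (nhdsWithin 0 (Set.Ioi 0)) (nhds (κ * ((m:ℝ) + 1) / ((m:ℝ) + 2) * r 0 ^ (m+2))) := by
    have hcomb := ((l2.const_mul (κ / ((m:ℝ) + 2))).add
      ((l3.pow (m+2)).const_mul (κ * ((m:ℝ) + 1) / ((m:ℝ) + 2)))).add l7
    rw [show κ / ((m:ℝ) + 2) * 0 + κ * ((m:ℝ) + 1) / ((m:ℝ) + 2) * r 0 ^ (m+2) + 0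
      = κ * ((m:ℝ) + 1) / ((m:ℝ) + 2) * r 0 ^ (m+2) by ring] at hcomb
    apply hcomb.congr'
    filter_upwards [hIoo] with ε hε
    have hε' : ε ∈ Set.Ioc (0:ℝ) 1 := ⟨hε.1, hε.2.le⟩
    have hεne : ε ≠ 0 := hε.1.ne'
    have hrne' : r ε ≠ 0 := (hr.pos ε hε').ne'
    simp only [Phi, show m+2-1 = m+1 from rfl]
    generalize h (r' ε * (r ε / ε) ^ (m+1)) = Y
    push_cast
    simp only [div_pow]
    field_simp
    ring
  have t2 : Tendsto (fun ε => ε ^ (m+2) * r' ε * Phi1 (m+2) κ h' (r' ε) (r ε / ε))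
      (nhdsWithin 0 (Set.Ioi 0)) (nhds 0) := by
    have hcomb := (l2.const_mul κ).add l6
    rw [show κ * 0 + 0 = (0:ℝ) by ring] at hcomb
    apply hcomb.congr'
    filter_upwards [hIoo] with ε hε
    have hε' : ε ∈ Set.Ioc (0:ℝ) 1 := ⟨hε.1, hε.2.le⟩
    have hεne : ε ≠ 0 := hε.1.ne'
    have hrne' : r ε ≠ 0 := (hr.pos ε hε').ne'
    simp only [Phi1, show m+2-1 = m+1 from rfl]
    field_simp
    ring
  have t3 : Tendsto (fun ε => r ε ^ (m+2) * g ε) (nhdsWithin 0 (Set.Ioi 0))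
      (nhds (r 0 ^ (m+2) * (g 1 - J))) := (l3.pow (m+2)).mul hgl
  have hQlim : Tendsto Q (nhdsWithin 0 (Set.Ioi 0))
      (nhds ((κ * ((m:ℝ) + 1) / ((m:ℝ) + 2) * r 0 ^ (m+2) - 0 + r 0 ^ (m+2) * (g 1 - J)) / ((m:ℝ) + 2))) :=
    ((t1.sub t2).add t3).div_const _
  -- eventual identity for the modified energy
  have hFeq : ∀ᶠ ε in nhdsWithin (0:ℝ) (Set.Ioi 0),
      Gfun 1 - Q ε
      = (∫ R in Set.Ioc ε 1, R ^ (m+1) * Phi (m+2) κ h (r' R) (r R / R))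
        - κ * (((m+2:ℕ):ℝ) - 1) / ((m+2:ℕ):ℝ) * (r ε) ^ (m+2) * Real.log (r ε / ε) := by
    filter_upwards [hIoo] with ε hε
    rw [hInt ε hε]
    have hε' : ε ∈ Set.Ioc (0:ℝ) 1 := ⟨hε.1, hε.2.le⟩
    have hεne : ε ≠ 0 := hε.1.ne'
    have hrne' : r ε ≠ 0 := (hr.pos ε hε').ne'
    have : Gfun ε + κ * (((m+2:ℕ):ℝ) - 1) / ((m+2:ℕ):ℝ) * (r ε) ^ (m+2) * Real.log (r ε / ε)
        = Q ε := by
      rw [hGdef, hQdef, hgdef]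
      simp only [Tstress, Phi1, show m+2-1 = m+1 from rfl]
      generalize h' (r' ε * (r ε / ε) ^ (m+1)) = X
      generalize Phi (m+2) κ h (r' ε) (r ε / ε) = P
      push_cast
      simp only [div_pow]
      field_simp
      ring
    linarith [this]
  have hFlim : Tendsto (fun ε => (∫ R in Set.Ioc ε 1, R ^ (m+1) * Phi (m+2) κ h (r' R) (r R / R))
      - κ * (((m+2:ℕ):ℝ) - 1) / ((m+2:ℕ):ℝ) * (r ε) ^ (m+2) * Real.log (r ε / ε))
      (nhdsWithin 0 (Set.Ioi 0))
      (nhds (Gfun 1 - (κ * ((m:ℝ) + 1) / ((m:ℝ) + 2) * r 0 ^ (m+2) - 0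
        + r 0 ^ (m+2) * (g 1 - J)) / ((m:ℝ) + 2))) := by
    apply (tendsto_const_nhds.sub hQlim).congr' hFeq
  refine ⟨g 1 - J, _, hgl, hFlim, ?_⟩
  -- final algebraic identity
  have hG1 : Gfun 1 = ((1:ℝ) ^ (m+2) * Phi (m+2) κ h (r' 1) lam
      + (lam - 1 * r' 1) * ((1:ℝ) ^ (m+2-1) * Phi1 (m+2) κ h' (r' 1) lam)) / ((m:ℝ) + 2) := by
    rw [hGdef]
    simp only [div_one, hbc]
  rw [hG1]
  have hTs : lam ^ (m+2) * Tstress (m+2) κ h' (r' 1) lam = lam * Phi1 (m+2) κ h' (r' 1) lam := by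
    simp only [Tstress, Phi1, show m+2-1 = m+1 from rfl]
    have hlamne : lam ≠ 0 := hlam.ne'
    simp only [div_pow]
    field_simp
    ring
  have hexp : ((m+2:ℕ):ℝ) = (m:ℝ) + 2 := by push_cast; ring
  rw [show (1 / ((m+2:ℕ):ℝ)) * (Phi (m+2) κ h (r' 1) lam - r' 1 * Phi1 (m+2) κ h' (r' 1) lam
      + lam ^ (m+2) * Tstress (m+2) κ h' (r' 1) lam)
    = (1 / ((m+2:ℕ):ℝ)) * (Phi (m+2) κ h (r' 1) lam - r' 1 * Phi1 (m+2) κ h' (r' 1) lam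
      + lam * Phi1 (m+2) κ h' (r' 1) lam) from by rw [hTs]]
  rw [hexp]
  push_cast
  field_simp
  ring

end
end

section
/- Let r ∈ C²((0,1]) ∩ C([0,1]) with r'(R) > 0 on (0,1] be a solution of the radial equilibrium equation with r(0) = 0. Then L = lim_{R→0⁺} r(R)/R exists and is finite, and consequently lim_{ε→0⁺} r(ε)ⁿ ln(r(ε)/ε) = 0; hence the modified energy Î(r) := lim_{ε→0⁺} [ ∫_ε¹ R^{n−1} Φ(r'(R), r(R)/R, …, r(R)/R) dR − (κ(n−1)/n) r(ε)ⁿ ln(r(ε)/ε) ] coincides (as a value in (−∞,∞]) with the original energy I(r) = ∫₀¹ R^{n−1} Φ(r'(R), r(R)/R, …, r(R)/R) dR. -/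
open Real MeasureTheory Filter Set
open scoped ENNReal NNReal

noncomputable section

section Aux

variable {n : ℕ} {κ : ℝ} {h h' h'' : ℝ → ℝ} {r r' r'' : ℝ → ℝ}

/-- interior points: HasDerivAt versions -/
lemma RadialSol.hasDerivAt_r (hr : RadialSol n κ h' r r' r'') {R : ℝ} (hR : R ∈ Set.Ioo (0:ℝ) 1) :
    HasDerivAt r (r' R) R :=
  (hr.hasDeriv R ⟨hR.1, hR.2.le⟩).hasDerivAt (Ioc_mem_nhds hR.1 hR.2)

lemma RadialSol.contOn_r (hr : RadialSol n κ h' r r' r'') : ContinuousOn r (Set.Ioc 0 1) :=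
  fun R hR => (hr.hasDeriv R hR).continuousWithinAt

lemma RadialSol.contOn_r' (hr : RadialSol n κ h' r r' r'') : ContinuousOn r' (Set.Ioc 0 1) :=
  fun R hR => (hr.hasDeriv2 R hR).continuousWithinAt

/-- derivative of v = r/R -/
lemma RadialSol.hasDeriv_v (hr : RadialSol n κ h' r r' r'') {R : ℝ} (hR : R ∈ Set.Ioc (0:ℝ) 1) :
    HasDerivWithinAt (fun s => r s / s) ((r' R - r R / R) / R) (Set.Ioc 0 1) R := by
  have hR0 : (0:ℝ) < R := hR.1
  have := (hr.hasDeriv R hR).fun_div (hasDerivWithinAt_id R _) hR0.ne'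
  refine this.congr_deriv ?_
  simp only [id, mul_one]
  field_simp

end Aux

section T
variable {n : ℕ} {κ : ℝ} {h h' h'' : ℝ → ℝ} {r r' r'' : ℝ → ℝ}

lemma RadialSol.hasDeriv_T (hr : RadialSol n κ h' r r' r'') (hn : 2 ≤ n) {R : ℝ}
    (hR : R ∈ Set.Ioc (0:ℝ) 1) :
    HasDerivWithinAt (fun s => Tstress n κ h' (r' s) (r s / s))
      (((n:ℝ) - 1) * κ / R * (1 - (r' R * R / r R) ^ n)) (Set.Ioc 0 1) R := by
  obtain ⟨m, rfl⟩ : ∃ m, n = m + 2 := ⟨n - 2, by omega⟩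
  have hR0 : (0:ℝ) < R := hR.1
  have hrR : (0:ℝ) < r R := hr.pos R hR
  have hA := hr.equil R hR
  have hpow : HasDerivWithinAt (fun s => (r s) ^ (m+1))
      ((m+1 : ℕ) * (r R) ^ m * r' R) (Set.Ioc 0 1) R := by
    simpa using (hr.hasDeriv R hR).fun_pow (m+1)
  have hdiv := hA.div hpow (pow_ne_zero _ hrR.ne')
  have heq : ∀ y ∈ Set.Ioc (0:ℝ) 1,
      Tstress (m+2) κ h' (r' y) (r y / y) =
      (fun s => s ^ (m+2-1) * Phi1 (m+2) κ h' (r' s) (r s / s)) y / (r y) ^ (m+1) := by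
    intro y hy
    have hy0 : (0:ℝ) < y := hy.1
    have hry : (0:ℝ) < r y := hr.pos y hy
    simp only [Tstress, Phi1, Nat.add_sub_cancel, show m + 2 - 1 = m + 1 from rfl]
    generalize h' (r' y * (r y / y) ^ (m + 1)) = H
    simp only [div_pow]
    field_simp
  refine (hdiv.congr heq (heq R hR)).congr_deriv ?_
  simp only [Phi1, Phi2, Nat.add_sub_cancel, show m+2-2 = m from rfl, show m + 2 - 1 = m + 1 from rfl]
  generalize h' (r' R * (r R / R) ^ (m + 1)) = H
  push_cast
  simp only [div_pow]
  field_simp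
  ring
end T

section G
variable {n : ℕ} {κ : ℝ} {h h' h'' : ℝ → ℝ} {r r' r'' : ℝ → ℝ}

/-- The comparison function `G(q,v) = κ + h'(vⁿ) − T(q,v)`. -/
def Gfun (n : ℕ) (κ : ℝ) (h' : ℝ → ℝ) (q v : ℝ) : ℝ :=
  κ + h' (v ^ n) - Tstress n κ h' q v

lemma GoodH.strictMonoOn_h' (hh : GoodH h h' h'') : StrictMonoOn h' (Set.Ioi 0) := by
  apply strictMonoOn_of_hasDerivWithinAt_pos (convex_Ioi 0)
    (fun d hd => (hh.deriv2 d hd).continuousAt.continuousWithinAt)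
  · intro x hx
    rw [interior_Ioi] at hx ⊢
    exact (hh.deriv2 x hx).hasDerivWithinAt
  · intro x hx
    rw [interior_Ioi] at hx
    exact hh.hpp_pos x hx

lemma Gfun_pos (hn : 2 ≤ n) (hκ : 0 < κ) (hmono : StrictMonoOn h' (Set.Ioi 0))
    {q v : ℝ} (hq : 0 < q) (hv : 0 < v) (hlt : q < v) : 0 < Gfun n κ h' q v := by
  obtain ⟨m, rfl⟩ : ∃ m, n = m + 2 := ⟨n - 2, by omega⟩
  have h1 : (q / v) ^ (m + 1) < 1 := by
    apply pow_lt_one₀ (by positivity) ((div_lt_one hv).2 hlt) (by omega)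
  have h2 : h' (q * v ^ (m + 1)) < h' (v ^ (m + 2)) := by
    apply hmono (Set.mem_Ioi.2 (by positivity)) (Set.mem_Ioi.2 (by positivity))
    calc q * v ^ (m + 1) < v * v ^ (m + 1) := by
          exact mul_lt_mul_of_pos_right hlt (by positivity)
      _ = v ^ (m + 2) := by ring
  have h3 : κ * (q / v) ^ (m + 1) < κ * 1 := by
    exact mul_lt_mul_of_pos_left h1 hκ
  simp only [Gfun, Tstress, show m + 2 - 1 = m + 1 from rfl]
  nlinarith
lemma Gfun_neg (hn : 2 ≤ n) (hκ : 0 < κ) (hmono : StrictMonoOn h' (Set.Ioi 0))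
    {q v : ℝ} (hq : 0 < q) (hv : 0 < v) (hlt : v < q) : Gfun n κ h' q v < 0 := by
  obtain ⟨m, rfl⟩ : ∃ m, n = m + 2 := ⟨n - 2, by omega⟩
  have h1 : (1:ℝ) < (q / v) ^ (m + 1) := by
    apply one_lt_pow₀ ((one_lt_div hv).2 hlt) (by omega)
  have h2 : h' (v ^ (m + 2)) < h' (q * v ^ (m + 1)) := by
    apply hmono (Set.mem_Ioi.2 (by positivity)) (Set.mem_Ioi.2 (by positivity))
    calc v ^ (m + 2) = v * v ^ (m + 1) := by ring
      _ < q * v ^ (m + 1) := by exact mul_lt_mul_of_pos_right hlt (by positivity)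
  have h3 : κ * 1 < κ * (q / v) ^ (m + 1) := mul_lt_mul_of_pos_left h1 hκ
  simp only [Gfun, Tstress, show m + 2 - 1 = m + 1 from rfl]
  nlinarith
lemma Gfun_diag {v : ℝ} (hn : 2 ≤ n) (hv : 0 < v) : Gfun n κ h' v v = 0 := by
  obtain ⟨m, rfl⟩ : ∃ m, n = m + 2 := ⟨n - 2, by omega⟩
  have hvv : v * v ^ (m + 1) = v ^ (m + 2) := by ring
  simp only [Gfun, Tstress, div_self hv.ne', one_pow, mul_one,
    show m + 2 - 1 = m + 1 from rfl, hvv]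
  ring
end G

section GDer
variable {n : ℕ} {κ : ℝ} {h h' h'' : ℝ → ℝ} {r r' r'' : ℝ → ℝ}

/-- The derivative of `R ↦ G(r'(R), r(R)/R)`. -/
def Gder (n : ℕ) (κ : ℝ) (h'' : ℝ → ℝ) (r r' : ℝ → ℝ) (R : ℝ) : ℝ :=
  h'' ((r R / R) ^ n) * ((n : ℝ) * (r R / R) ^ (n - 1) * ((r' R - r R / R) / R))
    - ((n : ℝ) - 1) * κ / R * (1 - (r' R * R / r R) ^ n)

lemma RadialSol.hasDeriv_G (hr : RadialSol n κ h' r r' r'') (hh : GoodH h h' h'')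
    (hn : 2 ≤ n) {R : ℝ} (hR : R ∈ Set.Ioc (0:ℝ) 1) :
    HasDerivWithinAt (fun s => Gfun n κ h' (r' s) (r s / s))
      (Gder n κ h'' r r' R) (Set.Ioc 0 1) R := by
  have hR0 : (0:ℝ) < R := hR.1
  have hrR : (0:ℝ) < r R := hr.pos R hR
  have hv : (0:ℝ) < r R / R := div_pos hrR hR0
  have hvpow : HasDerivWithinAt (fun s => (r s / s) ^ n)
      ((n:ℝ) * (r R / R) ^ (n - 1) * ((r' R - r R / R) / R)) (Set.Ioc 0 1) R := by
    simpa using (hr.hasDeriv_v hR).fun_pow n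
  have houter := (hh.deriv2 _ (pow_pos hv n)).comp_hasDerivWithinAt R hvpow
  have hT := hr.hasDeriv_T hn hR
  simpa [Gfun, Gder, Function.comp_def, mul_comm, mul_assoc, mul_left_comm] using
    ((hasDerivWithinAt_const R _ κ).fun_add houter).fun_sub hT

lemma RadialSol.G_mul_Gder_nonpos (hr : RadialSol n κ h' r r' r'') (hh : GoodH h h' h'')
    (hn : 2 ≤ n) (hκ : 0 < κ) {R : ℝ} (hR : R ∈ Set.Ioc (0:ℝ) 1) :
    Gfun n κ h' (r' R) (r R / R) * Gder n κ h'' r r' R ≤ 0 := by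
  have hR0 : (0:ℝ) < R := hR.1
  have hrR : (0:ℝ) < r R := hr.pos R hR
  have hq : (0:ℝ) < r' R := hr.derivPos R hR
  have hv : (0:ℝ) < r R / R := div_pos hrR hR0
  have hpp : 0 < h'' ((r R / R) ^ n) := hh.hpp_pos _ (pow_pos hv n)
  have hn1 : (0:ℝ) < (n:ℝ) - 1 := by
    have : (2:ℝ) ≤ (n:ℝ) := by exact_mod_cast hn
    linarith
  have hratio : r' R * R / r R = r' R / (r R / R) := by
    field_simp
  rcases lt_trichotomy (r' R) (r R / R) with hlt | heq | hgt
  · have hG : 0 < Gfun n κ h' (r' R) (r R / R) :=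
      Gfun_pos hn hκ hh.strictMonoOn_h' hq hv hlt
    have hr1 : (r' R * R / r R) ^ n < 1 := by
      rw [hratio]
      exact pow_lt_one₀ (by positivity) ((div_lt_one hv).2 hlt) (by omega)
    have hD : Gder n κ h'' r r' R < 0 := by
      have t1 : h'' ((r R / R) ^ n) * ((n : ℝ) * (r R / R) ^ (n - 1) * ((r' R - r R / R) / R)) < 0 := by
        apply mul_neg_of_pos_of_neg hpp
        apply mul_neg_of_pos_of_neg (by positivity)
        apply div_neg_of_neg_of_pos (by linarith) hR0
      have t2 : 0 < ((n : ℝ) - 1) * κ / R * (1 - (r' R * R / r R) ^ n) := by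
        apply mul_pos (by positivity) (by linarith)
      simp only [Gder]; linarith
    exact le_of_lt (mul_neg_of_pos_of_neg hG hD)
  · rw [← heq, Gfun_diag hn hq]
    simp
  · have hG : Gfun n κ h' (r' R) (r R / R) < 0 :=
      Gfun_neg hn hκ hh.strictMonoOn_h' hq hv hgt
    have hr1 : 1 < (r' R * R / r R) ^ n := by
      rw [hratio]
      exact one_lt_pow₀ ((one_lt_div hv).2 hgt) (by omega)
    have hD : 0 < Gder n κ h'' r r' R := by
      have t1 : 0 < h'' ((r R / R) ^ n) * ((n : ℝ) * (r R / R) ^ (n - 1) * ((r' R - r R / R) / R)) := by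
        apply mul_pos hpp
        apply mul_pos (by positivity)
        apply div_pos (by linarith) hR0
      have t2 : ((n : ℝ) - 1) * κ / R * (1 - (r' R * R / r R) ^ n) < 0 := by
        apply mul_neg_of_pos_of_neg (by positivity) (by linarith)
      simp only [Gder]; linarith
    exact le_of_lt (mul_neg_of_neg_of_pos hG hD)

end GDer

section Gsq
variable {n : ℕ} {κ : ℝ} {h h' h'' : ℝ → ℝ} {r r' r'' : ℝ → ℝ}

lemma RadialSol.Gsq_antitone (hr : RadialSol n κ h' r r' r'') (hh : GoodH h h' h'')
    (hn : 2 ≤ n) (hκ : 0 < κ) :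
    AntitoneOn (fun R => (Gfun n κ h' (r' R) (r R / R)) ^ 2) (Set.Ioc 0 1) := by
  apply antitoneOn_of_hasDerivWithinAt_nonpos (f' := fun R =>
      2 * Gfun n κ h' (r' R) (r R / R) * Gder n κ h'' r r' R) (convex_Ioc 0 1)
  · exact fun R hR => ((hr.hasDeriv_G hh hn hR).continuousWithinAt).pow 2
  · intro x hx
    rw [interior_Ioc] at hx ⊢
    have hG : HasDerivAt (fun s => Gfun n κ h' (r' s) (r s / s))
        (Gder n κ h'' r r' x) x :=
      (hr.hasDeriv_G hh hn ⟨hx.1, hx.2.le⟩).hasDerivAt (Ioc_mem_nhds hx.1 hx.2)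
    simpa [mul_comm, mul_assoc] using (hG.fun_pow 2).hasDerivWithinAt
  · intro x hx
    rw [interior_Ioc] at hx
    have := hr.G_mul_Gder_nonpos hh hn hκ ⟨hx.1, hx.2.le⟩
    nlinarith

lemma RadialSol.G_propagate (hr : RadialSol n κ h' r r' r'') (hh : GoodH h h' h'')
    (hn : 2 ≤ n) (hκ : 0 < κ) {R₀ x : ℝ} (hR₀ : R₀ ∈ Set.Ioc (0:ℝ) 1)
    (hx : x ∈ Set.Ioc (0:ℝ) 1) (hle : R₀ ≤ x)
    (h0 : Gfun n κ h' (r' R₀) (r R₀ / R₀) = 0) :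
    Gfun n κ h' (r' x) (r x / x) = 0 := by
  have := hr.Gsq_antitone hh hn hκ hR₀ hx hle
  simp only [h0] at this
  have h2 : (Gfun n κ h' (r' x) (r x / x)) ^ 2 ≤ 0 := by simpa using this
  nlinarith [sq_nonneg (Gfun n κ h' (r' x) (r x / x))]

/-- Dichotomy: near 0, G has a (weak) constant sign. -/
lemma RadialSol.G_dichotomy (hr : RadialSol n κ h' r r' r'') (hh : GoodH h h' h'')
    (hn : 2 ≤ n) (hκ : 0 < κ) :
    ∃ ρ ∈ Set.Ioc (0:ℝ) 1,
      (∀ R ∈ Set.Ioo (0:ℝ) ρ, 0 ≤ Gfun n κ h' (r' R) (r R / R)) ∨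
      (∀ R ∈ Set.Ioo (0:ℝ) ρ, Gfun n κ h' (r' R) (r R / R) ≤ 0) := by
  set G : ℝ → ℝ := fun R => Gfun n κ h' (r' R) (r R / R) with hGdef
  by_cases hz : ∀ x ∈ Set.Ioc (0:ℝ) 1, G x = 0
  · exact ⟨1, ⟨one_pos, le_rfl⟩, Or.inl fun R hR => (hz R ⟨hR.1, hR.2.le⟩).ge⟩
  push_neg at hz
  obtain ⟨x₀, hx₀, hGx₀⟩ := hz
  have hsub : Set.Ioo (0:ℝ) x₀ ⊆ Set.Ioc (0:ℝ) 1 :=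
    fun y hy => ⟨hy.1, hy.2.le.trans hx₀.2⟩
  have hne : ∀ R ∈ Set.Ioo (0:ℝ) x₀, G R ≠ 0 := by
    intro R hR hR0
    exact hGx₀ (hr.G_propagate hh hn hκ (hsub hR) hx₀ hR.2.le hR0)
  have hcont : ContinuousOn G (Set.Ioc 0 1) :=
    fun R hR => (hr.hasDeriv_G hh hn hR).continuousWithinAt
  refine ⟨x₀, hx₀, ?_⟩
  by_cases hex : ∃ a ∈ Set.Ioo (0:ℝ) x₀, G a < 0
  · obtain ⟨a, ha, hGa⟩ := hex
    refine Or.inr fun R hR => ?_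
    by_contra hpos
    push_neg at hpos
    -- IVT between a and R gives a zero
    have hcont' : ContinuousOn G (Set.uIcc a R) := by
      apply hcont.mono
      intro y hy
      rcases le_total a R with hAR | hAR
      · rw [Set.uIcc_of_le hAR] at hy
        exact ⟨lt_of_lt_of_le ha.1 hy.1, (hy.2.trans hR.2.le).trans hx₀.2⟩
      · rw [Set.uIcc_of_ge hAR] at hy
        exact ⟨lt_of_lt_of_le hR.1 hy.1, (hy.2.trans ha.2.le).trans hx₀.2⟩
    have h0mem : (0:ℝ) ∈ Set.uIcc (G a) (G R) :=
      Set.mem_uIcc.2 (Or.inl ⟨hGa.le, hpos.le⟩)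
    obtain ⟨c, hc, hGc⟩ := intermediate_value_uIcc hcont' h0mem
    have hcmem : c ∈ Set.Ioo (0:ℝ) x₀ := by
      rcases le_total a R with hAR | hAR
      · rw [Set.uIcc_of_le hAR] at hc
        exact ⟨lt_of_lt_of_le ha.1 hc.1, lt_of_le_of_lt hc.2 hR.2⟩
      · rw [Set.uIcc_of_ge hAR] at hc
        exact ⟨lt_of_lt_of_le hR.1 hc.1, lt_of_le_of_lt hc.2 ha.2⟩
    exact hne c hcmem hGc
  · push_neg at hex
    exact Or.inl fun R hR => hex R hR

end Gsq

section KeyLimit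
variable {n : ℕ} {κ : ℝ} {h h' h'' : ℝ → ℝ} {r r' r'' : ℝ → ℝ}

/-- Main part 1: existence of the finite limit `L = lim_{R→0⁺} r(R)/R`. -/
lemma RadialSol.exists_lim (hr : RadialSol n κ h' r r' r'') (hh : GoodH h h' h'')
    (hn : 2 ≤ n) (hκ : 0 < κ) (hcont : ContinuousOn r (Set.Icc 0 1)) (h0 : r 0 = 0) :
    ∃ L : ℝ, Tendsto (fun R => r R / R) (nhdsWithin 0 (Set.Ioi 0)) (nhds L) := by
  obtain ⟨ρ, hρ, hsign⟩ := hr.G_dichotomy hh hn hκ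
  have hρ0 : (0:ℝ) < ρ := hρ.1
  have hsub : Set.Ioo (0:ℝ) ρ ⊆ Set.Ioc (0:ℝ) 1 := fun y hy => ⟨hy.1, hy.2.le.trans hρ.2⟩
  have hvcont : ContinuousOn (fun s => r s / s) (Set.Ioo 0 ρ) :=
    fun R hR => ((hr.hasDeriv_v (hsub hR)).continuousWithinAt).mono hsub
  have hvderiv : ∀ x ∈ interior (Set.Ioo (0:ℝ) ρ), HasDerivWithinAt (fun s => r s / s)
      ((r' x - r x / x) / x) (interior (Set.Ioo 0 ρ)) x := by
    intro x hx
    rw [(isOpen_Ioo).interior_eq] at hx ⊢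
    exact (hr.hasDeriv_v (hsub hx)).mono hsub
  rcases hsign with hpos | hneg
  · -- G ≥ 0 : q ≤ v, v antitone; needs upper bound
    have hqv : ∀ R ∈ Set.Ioo (0:ℝ) ρ, r' R ≤ r R / R := by
      intro R hR
      by_contra hlt
      push_neg at hlt
      exact absurd (hpos R hR)
        (not_le.2 (Gfun_neg hn hκ hh.strictMonoOn_h'
          (hr.derivPos R (hsub hR)) (div_pos (hr.pos R (hsub hR)) hR.1) hlt))
    have hvanti : AntitoneOn (fun s => r s / s) (Set.Ioo 0 ρ) := by
      apply antitoneOn_of_hasDerivWithinAt_nonpos (convex_Ioo 0 ρ) hvcont hvderiv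
      intro x hx
      rw [(isOpen_Ioo).interior_eq] at hx
      exact div_nonpos_of_nonpos_of_nonneg (by linarith [hqv x hx]) hx.1.le
    -- T monotone
    have hTmono : MonotoneOn (fun s => Tstress n κ h' (r' s) (r s / s)) (Set.Ioo 0 ρ) := by
      apply monotoneOn_of_hasDerivWithinAt_nonneg (convex_Ioo 0 ρ)
        (f' := fun R => ((n:ℝ) - 1) * κ / R * (1 - (r' R * R / r R) ^ n))
      · exact fun R hR => ((hr.hasDeriv_T hn (hsub hR)).continuousWithinAt).mono hsub
      · intro x hx
        rw [(isOpen_Ioo).interior_eq] at hx ⊢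
        exact (hr.hasDeriv_T hn (hsub hx)).mono hsub
      · intro x hx
        rw [(isOpen_Ioo).interior_eq] at hx
        have hx0 : (0:ℝ) < x := hx.1
        have hrx : (0:ℝ) < r x := hr.pos x (hsub hx)
        have hvx : (0:ℝ) < r x / x := div_pos hrx hx0
        have hn1 : (0:ℝ) < (n:ℝ) - 1 := by
          have : (2:ℝ) ≤ (n:ℝ) := by exact_mod_cast hn
          linarith
        have hratio : r' x * x / r x = r' x / (r x / x) := by field_simp
        have hle1 : (r' x * x / r x) ^ n ≤ 1 := by
          rw [hratio]
          exact pow_le_one₀ (div_pos (hr.derivPos x (hsub hx)) hvx).le ((div_le_one hvx).2 (hqv x hx))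
        apply mul_nonneg (by positivity) (by linarith)
    set ρ' := ρ / 2 with hρ'def
    have hρ'mem : ρ' ∈ Set.Ioo (0:ℝ) ρ := ⟨half_pos hρ0, half_lt_self hρ0⟩
    set C := Tstress n κ h' (r' ρ') (r ρ' / ρ') with hCdef
    obtain ⟨D₀, hD₀⟩ := eventually_atTop.1 (hh.dlim_top.eventually_gt_atTop C)
    set D := max D₀ 0 with hDdef
    have hD : ∀ d : ℝ, D ≤ d → C < h' d := fun d hd => hD₀ d (le_trans (le_max_left _ _) hd)
    have hD0 : 0 ≤ D := le_max_right _ _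
    have hδ : ∀ R ∈ Set.Ioo (0:ℝ) ρ', r' R * (r R / R) ^ (n - 1) < D := by
      intro R hR
      have hRmem : R ∈ Set.Ioo (0:ℝ) ρ := ⟨hR.1, hR.2.trans hρ'mem.2⟩
      have hTle : Tstress n κ h' (r' R) (r R / R) ≤ C :=
        hTmono hRmem hρ'mem hR.2.le
      have hterm : 0 ≤ κ * (r' R / (r R / R)) ^ (n - 1) := by
        have := hr.derivPos R (hsub hRmem)
        have := div_pos (hr.pos R (hsub hRmem)) hRmem.1
        positivity
      have hh'le : h' (r' R * (r R / R) ^ (n - 1)) ≤ C := by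
        have : Tstress n κ h' (r' R) (r R / R)
            = κ * (r' R / (r R / R)) ^ (n - 1) + h' (r' R * (r R / R) ^ (n - 1)) := rfl
        linarith [hTle, hterm, this ▸ hTle]
      by_contra hge
      push_neg at hge
      exact absurd hh'le (not_le.2 (hD _ hge))
    set M := max D 1 + 1 with hMdef
    have hM1 : (1:ℝ) < M := by
      have := le_max_right D (1:ℝ); simp only [hMdef]; linarith
    have hMD : D < M := by
      have := le_max_left D (1:ℝ); simp only [hMdef]; linarith
    have hbound : ∀ R ∈ Set.Ioo (0:ℝ) ρ', r R / R < M := by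
      intro R₀ hR₀
      by_contra hge
      push_neg at hge
      have hR₀mem : R₀ ∈ Set.Ioo (0:ℝ) ρ := ⟨hR₀.1, hR₀.2.trans hρ'mem.2⟩
      have hq_small : ∀ ξ ∈ Set.Ioo (0:ℝ) R₀, r' ξ < 1 := by
        intro ξ hξ
        have hξmem : Set.Ioo (0:ℝ) R₀ ⊆ Set.Ioo 0 ρ' := fun y hy => ⟨hy.1, hy.2.trans hR₀.2⟩
        have hξρ : ξ ∈ Set.Ioo (0:ℝ) ρ := ⟨hξ.1, (hξ.2.trans hR₀.2).trans hρ'mem.2⟩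
        have hvξ : M ≤ r ξ / ξ := le_trans hge (hvanti hξρ hR₀mem hξ.2.le)
        have hqξ : 0 < r' ξ := hr.derivPos ξ (hsub hξρ)
        have hδξ := hδ ξ (hξmem hξ)
        have hpowle : M ^ (n-1) ≤ (r ξ / ξ) ^ (n-1) :=
          pow_le_pow_left₀ (by linarith) hvξ _
        have hMpow : M ≤ M ^ (n - 1) := le_self_pow₀ (by linarith) (by omega)
        have hMpos : (0:ℝ) < M := by linarith
        nlinarith [pow_pos hMpos (n-1)]
      -- MVT
      have hR₀1 : R₀ < 1 := lt_of_lt_of_le (hR₀.2.trans hρ'mem.2) hρ.2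
      obtain ⟨c, hc, hslope⟩ := exists_hasDerivAt_eq_slope r r' hR₀.1
        (hcont.mono (Set.Icc_subset_Icc le_rfl hR₀1.le))
        (fun x hx => hr.hasDerivAt_r ⟨hx.1, hx.2.trans hR₀1⟩)
      rw [h0, sub_zero, sub_zero] at hslope
      have : r' c < 1 := hq_small c hc
      have hMle : M ≤ r' c := by rw [hslope]; exact hge
      linarith
    have hbdd : BddAbove ((fun s => r s / s) '' Set.Ioo 0 ρ') := by
      refine ⟨M, ?_⟩
      rintro y ⟨x, hx, rfl⟩
      exact (hbound x hx).le
    refine ⟨_, AntitoneOn.tendsto_nhdsWithin_Ioo_right ⟨ρ'/2, half_pos hρ'mem.1, half_lt_self hρ'mem.1⟩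
      (hvanti.mono (fun y hy => ⟨hy.1, hy.2.trans hρ'mem.2⟩)) hbdd⟩
  · -- G ≤ 0 : q ≥ v, v monotone, bounded below by 0
    have hqv : ∀ R ∈ Set.Ioo (0:ℝ) ρ, r R / R ≤ r' R := by
      intro R hR
      by_contra hlt
      push_neg at hlt
      exact absurd (hneg R hR)
        (not_le.2 (Gfun_pos hn hκ hh.strictMonoOn_h'
          (hr.derivPos R (hsub hR)) (div_pos (hr.pos R (hsub hR)) hR.1) hlt))
    have hvmono : MonotoneOn (fun s => r s / s) (Set.Ioo 0 ρ) := by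
      apply monotoneOn_of_hasDerivWithinAt_nonneg (convex_Ioo 0 ρ) hvcont hvderiv
      intro x hx
      rw [(isOpen_Ioo).interior_eq] at hx
      exact div_nonneg (by linarith [hqv x hx]) hx.1.le
    have hbdd : BddBelow ((fun s => r s / s) '' Set.Ioo 0 ρ) := by
      refine ⟨0, ?_⟩
      rintro y ⟨x, hx, rfl⟩
      exact (div_pos (hr.pos x (hsub hx)) hx.1).le
    exact ⟨_, MonotoneOn.tendsto_nhdsWithin_Ioo_right ⟨ρ/2, half_pos hρ0, half_lt_self hρ0⟩
      hvmono hbdd⟩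

end KeyLimit

section Part2
variable {n : ℕ} {κ : ℝ} {h h' h'' : ℝ → ℝ} {r r' r'' : ℝ → ℝ}

lemma pow_tendsto_zero (n : ℕ) (hn : 2 ≤ n) :
    Tendsto (fun ε : ℝ => ε ^ n) (nhdsWithin 0 (Set.Ioi 0)) (nhds 0) := by
  have := ((continuous_pow n).tendsto (0:ℝ)).mono_left
    (nhdsWithin_le_nhds (s := Set.Ioi (0:ℝ)))
  simpa [zero_pow (by omega : n ≠ 0)] using this

lemma part2 (hr : RadialSol n κ h' r r' r'') (hn : 2 ≤ n)
    {L : ℝ} (hL : Tendsto (fun R => r R / R) (nhdsWithin 0 (Set.Ioi 0)) (nhds L)) :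
    Tendsto (fun ε => (r ε) ^ n * Real.log (r ε / ε)) (nhdsWithin 0 (Set.Ioi 0)) (nhds 0) := by
  have hmem : Set.Ioc (0:ℝ) 1 ∈ nhdsWithin (0:ℝ) (Set.Ioi 0) :=
    Ioc_mem_nhdsGT one_pos
  have hvpos : ∀ᶠ ε in nhdsWithin (0:ℝ) (Set.Ioi 0), 0 < r ε / ε := by
    filter_upwards [hmem] with ε hε
    exact div_pos (hr.pos ε hε) hε.1
  have hL0 : 0 ≤ L := ge_of_tendsto hL (hvpos.mono fun ε hε => hε.le)
  have heq : ∀ᶠ ε in nhdsWithin (0:ℝ) (Set.Ioi 0),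
      ε ^ n * ((r ε / ε) ^ n * Real.log (r ε / ε)) = (r ε) ^ n * Real.log (r ε / ε) := by
    filter_upwards [self_mem_nhdsWithin] with ε hε
    have hε0 : (0:ℝ) < ε := hε
    rw [← mul_assoc, ← mul_pow, mul_div_cancel₀ _ hε0.ne']
  rcases eq_or_lt_of_le hL0 with hL0' | hLpos
  · have hvIoi : Tendsto (fun ε => r ε / ε) (nhdsWithin (0:ℝ) (Set.Ioi 0))
        (nhdsWithin (0:ℝ) (Set.Ioi 0)) := by
      rw [← hL0'] at hL
      exact tendsto_nhdsWithin_of_tendsto_nhds_of_eventually_within _ hL hvpos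
    have hg : Tendsto (fun x : ℝ => x ^ n * Real.log x)
        (nhdsWithin (0:ℝ) (Set.Ioi 0)) (nhds 0) := by
      have h1 := tendsto_log_mul_rpow_nhdsGT_zero
        (show (0:ℝ) < (n:ℝ) by exact_mod_cast (by omega : 0 < n))
      apply h1.congr'
      filter_upwards [self_mem_nhdsWithin] with x hx
      rw [Real.rpow_natCast]; ring
    have htot := (pow_tendsto_zero n hn).mul (hg.comp hvIoi)
    rw [zero_mul] at htot
    exact Tendsto.congr' heq htot
  · have h1 : Tendsto (fun ε => (r ε / ε) ^ n * Real.log (r ε / ε))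
        (nhdsWithin (0:ℝ) (Set.Ioi 0)) (nhds (L ^ n * Real.log L)) :=
      (hL.pow n).mul ((Real.continuousAt_log hLpos.ne').tendsto.comp hL)
    have htot := (pow_tendsto_zero n hn).mul h1
    rw [zero_mul] at htot
    exact Tendsto.congr' heq htot

end Part2

section Part34

lemma nhds_gt_eq_nhdsWithin_Ioc : nhdsWithin (0:ℝ) (Set.Ioc 0 1) = nhdsWithin 0 (Set.Ioi 0) := by
  rw [← Set.Ioi_inter_Iic]
  exact nhdsWithin_inter_of_mem' (mem_nhdsWithin_of_mem_nhds (Iic_mem_nhds one_pos))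

lemma tendsto_tail_integral {f : ℝ → ℝ} (hInt : IntegrableOn f (Set.Ioc 0 1)) :
    Tendsto (fun ε => ∫ R in Set.Ioc ε 1, f R) (nhdsWithin 0 (Set.Ioi 0))
      (nhds (∫ R in Set.Ioc (0:ℝ) 1, f R)) := by
  have hIcc : IntegrableOn f (Set.Icc 0 1) := by
    rwa [integrableOn_Icc_iff_integrableOn_Ioc]
  have hprim := intervalIntegral.continuousOn_primitive (μ := volume) (a := (0:ℝ)) (b := 1) hIcc
  have h0 : Tendsto (fun x => ∫ t in Set.Ioc 0 x, f t) (nhdsWithin (0:ℝ) (Set.Icc 0 1))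
      (nhds (∫ t in Set.Ioc (0:ℝ) 0, f t)) := hprim 0 (Set.left_mem_Icc.2 zero_le_one)
  have h0' : Tendsto (fun x => ∫ t in Set.Ioc 0 x, f t) (nhdsWithin (0:ℝ) (Set.Ioi 0))
      (nhds 0) := by
    have hle : nhdsWithin (0:ℝ) (Set.Ioi 0) ≤ nhdsWithin (0:ℝ) (Set.Icc 0 1) := by
      rw [← nhds_gt_eq_nhdsWithin_Ioc]
      exact nhdsWithin_mono _ Set.Ioc_subset_Icc_self
    simpa using h0.mono_left hle
  have hsplit : ∀ᶠ ε in nhdsWithin (0:ℝ) (Set.Ioi 0),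
      (∫ R in Set.Ioc (0:ℝ) 1, f R) - (∫ t in Set.Ioc (0:ℝ) ε, f t)
        = ∫ R in Set.Ioc ε 1, f R := by
    filter_upwards [Ioc_mem_nhdsGT one_pos] with ε hε
    have hun : Set.Ioc (0:ℝ) ε ∪ Set.Ioc ε 1 = Set.Ioc 0 1 :=
      Set.Ioc_union_Ioc_eq_Ioc hε.1.le hε.2
    rw [← hun, setIntegral_union (Set.Ioc_disjoint_Ioc_of_le le_rfl) measurableSet_Ioc
      (hInt.mono_set (by rw [← hun]; exact Set.subset_union_left))
      (hInt.mono_set (by rw [← hun]; exact Set.subset_union_right))]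
    ring
  have hmain : Tendsto (fun ε => (∫ R in Set.Ioc (0:ℝ) 1, f R) - ∫ t in Set.Ioc (0:ℝ) ε, f t)
      (nhdsWithin 0 (Set.Ioi 0)) (nhds ((∫ R in Set.Ioc (0:ℝ) 1, f R) - 0)) :=
    tendsto_const_nhds.sub h0'
  rw [sub_zero] at hmain
  exact Tendsto.congr' hsplit hmain

lemma tendsto_tail_integral_atTop {f : ℝ → ℝ} (hcont : ContinuousOn f (Set.Ioc 0 1))
    (hpos : ∀ x ∈ Set.Ioc (0:ℝ) 1, 0 ≤ f x)
    (hnot : ¬ IntegrableOn f (Set.Ioc 0 1)) :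
    Tendsto (fun ε => ∫ R in Set.Ioc ε 1, f R) (nhdsWithin 0 (Set.Ioi 0)) atTop := by
  have hint : ∀ a : ℝ, 0 < a → IntegrableOn f (Set.Ioc a 1) := by
    intro a ha
    rcases le_or_gt a 1 with ha1 | ha1
    · exact ((hcont.mono (fun y hy => ⟨lt_of_lt_of_le ha hy.1, hy.2⟩ :
        Set.Icc a 1 ⊆ Set.Ioc 0 1)).integrableOn_Icc).mono_set Set.Ioc_subset_Icc_self
    · rw [Set.Ioc_eq_empty (by linarith)]
      exact integrableOn_empty
  have hanti : ∀ a b : ℝ, 0 < a → a ≤ b →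
      (∫ R in Set.Ioc b 1, f R) ≤ ∫ R in Set.Ioc a 1, f R := by
    intro a b ha hab
    apply setIntegral_mono_set (hint a ha)
    · filter_upwards [ae_restrict_mem measurableSet_Ioc] with x hx
      exact hpos x ⟨lt_trans ha hx.1, hx.2⟩
    · exact (Set.Ioc_subset_Ioc_left hab).eventuallyLE
  rw [tendsto_atTop]
  intro M
  by_cases hex : ∃ a ∈ Set.Ioo (0:ℝ) 1, M ≤ ∫ R in Set.Ioc a 1, f R
  · obtain ⟨a, ha, hMa⟩ := hex
    filter_upwards [Ioc_mem_nhdsGT ha.1] with ε hε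
    exact le_trans hMa (hanti ε a hε.1 hε.2)
  · push_neg at hex
    exfalso
    apply hnot
    set a : ℕ → ℝ := fun k => 1 / ((k:ℝ) + 2) with hadef
    have ha_pos : ∀ k, 0 < a k := fun k => by positivity
    have ha_lt : ∀ k, a k < 1 := by
      intro k
      rw [hadef, div_lt_one (by positivity)]
      have : (0:ℝ) ≤ (k:ℝ) := Nat.cast_nonneg k
      linarith
    have ha_tend : Tendsto a atTop (nhds 0) := by
      have h2 : Tendsto (fun k : ℕ => ((k:ℝ) + 2)) atTop atTop :=
        tendsto_atTop_add_const_right _ 2 tendsto_natCast_atTop_atTop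
      simpa [hadef, one_div, Pi.inv_def] using h2.inv_tendsto_atTop
    apply integrableOn_Ioc_of_intervalIntegral_norm_bounded_left (I := M)
      (fun k => hint (a k) (ha_pos k)) ha_tend
    apply Filter.Eventually.of_forall
    intro k
    have hcongr : (∫ x in Set.Ioc (a k) 1, ‖f x‖) = ∫ x in Set.Ioc (a k) 1, f x := by
      apply setIntegral_congr_fun measurableSet_Ioc
      intro x hx
      exact Real.norm_of_nonneg (hpos x ⟨lt_trans (ha_pos k) hx.1, hx.2⟩)
    rw [hcongr]
    exact (hex (a k) ⟨ha_pos k, ha_lt k⟩).le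

end Part34


/-- for a non-cavitating solution (`r(0) = 0`), `r(R)/R` has a finite
limit as `R → 0⁺`, the boundary correction tends to `0`, and the modified energy
coincides with the original energy (as a value in `(−∞,∞]`). -/
theorem stmt9 (n : ℕ) (hn : 2 ≤ n) (κ : ℝ) (hκ : 0 < κ)
    (h h' h'' : ℝ → ℝ) (hh : GoodH h h' h'')
    (r r' r'' : ℝ → ℝ) (hr : RadialSol n κ h' r r' r'')
    (hcont : ContinuousOn r (Set.Icc 0 1)) (h0 : r 0 = 0) :
    (∃ L : ℝ, Tendsto (fun R => r R / R) (nhdsWithin 0 (Set.Ioi 0)) (nhds L)) ∧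
    Tendsto (fun ε => (r ε) ^ n * Real.log (r ε / ε)) (nhdsWithin 0 (Set.Ioi 0)) (nhds 0) ∧
    (IntegrableOn (fun R => R ^ (n - 1) * Phi n κ h (r' R) (r R / R)) (Set.Ioc 0 1) →
      Tendsto (fun ε => (∫ R in Set.Ioc ε 1, R ^ (n - 1) * Phi n κ h (r' R) (r R / R))
          - κ * ((n:ℝ) - 1) / n * (r ε) ^ n * Real.log (r ε / ε))
        (nhdsWithin 0 (Set.Ioi 0))
        (nhds (∫ R in Set.Ioc (0:ℝ) 1, R ^ (n - 1) * Phi n κ h (r' R) (r R / R)))) ∧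
    (¬ IntegrableOn (fun R => R ^ (n - 1) * Phi n κ h (r' R) (r R / R)) (Set.Ioc 0 1) →
      Tendsto (fun ε => (∫ R in Set.Ioc ε 1, R ^ (n - 1) * Phi n κ h (r' R) (r R / R))
          - κ * ((n:ℝ) - 1) / n * (r ε) ^ n * Real.log (r ε / ε))
        (nhdsWithin 0 (Set.Ioi 0)) atTop) := by
  obtain ⟨L, hL⟩ := hr.exists_lim hh hn hκ hcont h0
  have h2 := part2 hr hn hL
  have hc : Tendsto (fun ε => κ * ((n:ℝ) - 1) / n * (r ε) ^ n * Real.log (r ε / ε))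
      (nhdsWithin 0 (Set.Ioi 0)) (nhds 0) := by
    have hmul := h2.const_mul (κ * ((n:ℝ) - 1) / n)
    rw [mul_zero] at hmul
    exact hmul.congr (fun ε => by ring)
  refine ⟨⟨L, hL⟩, h2, ?_, ?_⟩
  · intro hInt
    have hmain := (tendsto_tail_integral hInt).sub hc
    rwa [sub_zero] at hmain
  · intro hInt
    have hvc : ContinuousOn (fun R : ℝ => r R / R) (Set.Ioc 0 1) :=
      hr.contOn_r.div continuousOn_id (fun x hx => hx.1.ne')
    have hhc : ContinuousOn h (Set.Ioi 0) :=
      fun d hd => ((hh.deriv1 d hd).continuousAt).continuousWithinAt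
    have hcomp : ContinuousOn (fun R => h (r' R * (r R / R) ^ (n - 1))) (Set.Ioc 0 1) :=
      hhc.comp (hr.contOn_r'.mul (hvc.pow _)) (fun x hx => Set.mem_Ioi.2
        (mul_pos (hr.derivPos x hx) (pow_pos (div_pos (hr.pos x hx) hx.1) _)))
    have hfc : ContinuousOn (fun R => R ^ (n - 1) * Phi n κ h (r' R) (r R / R))
        (Set.Ioc 0 1) := by
      apply ContinuousOn.mul ((continuous_pow (n - 1)).continuousOn)
      simp only [Phi]
      exact (continuousOn_const.mul ((hr.contOn_r'.pow n).add
        (continuousOn_const.mul (hvc.pow n)))).add hcomp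
    have hfpos : ∀ x ∈ Set.Ioc (0:ℝ) 1, 0 ≤ x ^ (n - 1) * Phi n κ h (r' x) (r x / x) := by
      intro x hx
      have hq : 0 < r' x := hr.derivPos x hx
      have hv : 0 < r x / x := div_pos (hr.pos x hx) hx.1
      have hh0 : 0 ≤ h (r' x * (r x / x) ^ (n - 1)) :=
        hh.nonneg _ (mul_pos hq (pow_pos hv _))
      have hn1 : (0:ℝ) ≤ (n:ℝ) - 1 := by
        have : (2:ℝ) ≤ (n:ℝ) := by exact_mod_cast hn
        linarith
      apply mul_nonneg (pow_nonneg hx.1.le _)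
      apply add_nonneg _ hh0
      apply mul_nonneg (div_nonneg hκ.le (Nat.cast_nonneg n))
      exact add_nonneg (pow_nonneg hq.le n) (mul_nonneg hn1 (pow_nonneg hv.le n))
    have hmain := tendsto_tail_integral_atTop hfc hfpos hInt
    have hbnd : ∀ᶠ ε in nhdsWithin (0:ℝ) (Set.Ioi 0),
        (-1:ℝ) ≤ -(κ * ((n:ℝ) - 1) / n * (r ε) ^ n * Real.log (r ε / ε)) := by
      filter_upwards [hc.eventually (eventually_lt_nhds one_pos)] with ε hε
      linarith
    have := tendsto_atTop_add_right_of_le' _ (-1:ℝ) hmain hbnd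
    exact this.congr (fun ε => by ring)

end
end

section
/- Let r ∈ C²((0,1]) with r'(R) > 0 be a solution of the modified equilibrium equation (d/dR)[R^{n−1} Φ̂_{,1}(r(R))] = (n−1) R^{n−2} Φ̂_{,2}(r(R)). Then the map R ↦ T̂(r(R)) is C¹ on (0,1] and (d/dR) T̂(r(R)) = (n−1)κ (r'(R)/r(R)) ( 1 − (r'(R))^{n−1} / (r(R)/R)^{n−1} ). In particular, if r extends continuously to [0,1] with r(0) > 0 and δ(R) = r'(R)(r(R)/R)^{n−1} is bounded, then T̂(r(·)) is monotone increasing on (0,1]. -/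
open Real MeasureTheory Filter Set
open scoped ENNReal NNReal

noncomputable section

/-- Modified radial stored energy
`Φ̂(q,v,…,v) = (κ/n)qⁿ + h(q v^{n−1}) + κ q v^{n−1}((n−1)/n + ln(v^{n−1}))`. -/
def PhiHat (n : ℕ) (κ : ℝ) (h : ℝ → ℝ) (q v : ℝ) : ℝ :=
  (κ / n) * q ^ n + h (q * v ^ (n - 1)) +
    κ * (q * v ^ (n - 1)) * (((n : ℝ) - 1) / n + ((n : ℝ) - 1) * Real.log v)

/-- `Φ̂_{,1}(q,v,…,v) = κ q^{n−1} + v^{n−1} h'(q v^{n−1}) + κ v^{n−1}((n−1)/n + (n−1) ln v)`. -/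
def PhiHat1 (n : ℕ) (κ : ℝ) (h' : ℝ → ℝ) (q v : ℝ) : ℝ :=
  κ * q ^ (n - 1) + v ^ (n - 1) * h' (q * v ^ (n - 1)) +
    κ * v ^ (n - 1) * (((n : ℝ) - 1) / n + ((n : ℝ) - 1) * Real.log v)

/-- `Φ̂_{,2}(q,v,…,v) = q v^{n−2}(h'(q v^{n−1}) + κ + κ(n−1)(1/n + ln v))`. -/
def PhiHat2 (n : ℕ) (κ : ℝ) (h' : ℝ → ℝ) (q v : ℝ) : ℝ :=
  q * v ^ (n - 2) *
    (h' (q * v ^ (n - 1)) + κ + κ * (((n : ℝ) - 1) * (1 / n + Real.log v)))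

/-- Modified radial Cauchy stress
`T̂(q,v) = κ(q/v)^{n−1} + h'(q v^{n−1}) + (n−1)κ(1/n + ln v)`. -/
def THat (n : ℕ) (κ : ℝ) (h' : ℝ → ℝ) (q v : ℝ) : ℝ :=
  κ * (q / v) ^ (n - 1) + h' (q * v ^ (n - 1)) +
    ((n : ℝ) - 1) * κ * (1 / n + Real.log v)

/-- `r ∈ C²((0,1])`, with `r, r' > 0` on `(0,1]`, solving the modified radial
equilibrium equation `(d/dR)[R^{n−1} Φ̂_{,1}(r(R))] = (n−1) R^{n−2} Φ̂_{,2}(r(R))`. -/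
structure ModRadialSol (n : ℕ) (κ : ℝ) (h' : ℝ → ℝ) (r r' r'' : ℝ → ℝ) : Prop where
  pos : ∀ R ∈ Set.Ioc (0:ℝ) 1, 0 < r R
  derivPos : ∀ R ∈ Set.Ioc (0:ℝ) 1, 0 < r' R
  hasDeriv : ∀ R ∈ Set.Ioc (0:ℝ) 1, HasDerivWithinAt r (r' R) (Set.Ioc 0 1) R
  hasDeriv2 : ∀ R ∈ Set.Ioc (0:ℝ) 1, HasDerivWithinAt r' (r'' R) (Set.Ioc 0 1) R
  cont2 : ContinuousOn r'' (Set.Ioc 0 1)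
  equil : ∀ R ∈ Set.Ioc (0:ℝ) 1,
    HasDerivWithinAt (fun s => s ^ (n - 1) * PhiHat1 n κ h' (r' s) (r s / s))
      (((n : ℝ) - 1) * R ^ (n - 2) * PhiHat2 n κ h' (r' R) (r R / R)) (Set.Ioc 0 1) R


open Topology

open Finset in
lemma g_identity (m : ℕ) (u : ℝ) :
    ((m:ℝ)+1)*u^(m+2) - ((m:ℝ)+2)*u^(m+1) + 1
      = (u-1) * (((m:ℝ)+1)*u^(m+1) - ∑ k ∈ Finset.range (m+1), u^k) := by
  have h := geom_sum_mul u (m+1)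
  push_cast at h ⊢
  linear_combination h

lemma g_nonneg (m : ℕ) (u : ℝ) (hu : 1 ≤ u) :
    0 ≤ ((m:ℝ)+1)*u^(m+2) - ((m:ℝ)+2)*u^(m+1) + 1 := by
  rw [g_identity]
  apply mul_nonneg (by linarith)
  have : ∑ k ∈ Finset.range (m+1), u^k ≤ ∑ k ∈ Finset.range (m+1), u^(m+1) := by
    apply Finset.sum_le_sum
    intro k hk
    exact pow_le_pow_right₀ (by linarith) (by have := Finset.mem_range.mp hk; omega)
  simp [Finset.sum_const, Finset.card_range] at this
  push_cast
  nlinarith [this]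

lemma g_le (m : ℕ) (u T : ℝ) (hu : 1 ≤ u) (huT : u ≤ T) :
    ((m:ℝ)+1)*u^(m+2) - ((m:ℝ)+2)*u^(m+1) + 1 ≤ ((m:ℝ)+1)^2 * T^(m+1) * (u-1)^2 := by
  have hT : (1:ℝ) ≤ T := le_trans hu huT
  have hS_le : ∑ k ∈ Finset.range (m+1), u^k ≤ ((m:ℝ)+1) * T^(m+1) := by
    have : ∑ k ∈ Finset.range (m+1), u^k ≤ ∑ k ∈ Finset.range (m+1), T^(m+1) := by
      apply Finset.sum_le_sum
      intro k hk
      calc u^k ≤ T^k := pow_le_pow_left₀ (by linarith) huT k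
        _ ≤ T^(m+1) := pow_le_pow_right₀ hT (by have := Finset.mem_range.mp hk; omega)
    simpa [Finset.sum_const, Finset.card_range] using this
  have hSum_ge : ∑ k ∈ Finset.range (m+1), u^k ≥ ((m:ℝ)+1) * 1 := by
    have : ∑ k ∈ Finset.range (m+1), (1:ℝ) ≤ ∑ k ∈ Finset.range (m+1), u^k := by
      apply Finset.sum_le_sum
      intro k hk
      exact one_le_pow₀ hu
    simpa [Finset.sum_const, Finset.card_range] using this
  have h1 : ((m:ℝ)+1)*u^(m+1) - ∑ k ∈ Finset.range (m+1), u^k ≤ ((m:ℝ)+1) * (u^(m+1) - 1) := by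
    nlinarith [hSum_ge]
  have h2 : u^(m+1) - 1 = (∑ k ∈ Finset.range (m+1), u^k) * (u - 1) := (geom_sum_mul u (m+1)).symm
  have hu1 : 0 ≤ u - 1 := by linarith
  have h3 : ((m:ℝ)+1)*u^(m+1) - ∑ k ∈ Finset.range (m+1), u^k ≤ ((m:ℝ)+1) * (((m:ℝ)+1) * T^(m+1)) * (u-1) := by
    rw [h2] at h1
    calc ((m:ℝ)+1)*u^(m+1) - ∑ k ∈ Finset.range (m+1), u^k
        ≤ ((m:ℝ)+1) * ((∑ k ∈ Finset.range (m+1), u^k) * (u-1)) := h1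
      _ ≤ ((m:ℝ)+1) * (((m:ℝ)+1) * T^(m+1) * (u-1)) := by
          apply mul_le_mul_of_nonneg_left _ (by positivity)
          exact mul_le_mul_of_nonneg_right hS_le hu1
      _ = ((m:ℝ)+1) * (((m:ℝ)+1) * T^(m+1)) * (u-1) := by ring
  rw [g_identity]
  calc (u-1) * (((m:ℝ)+1)*u^(m+1) - ∑ k ∈ Finset.range (m+1), u^k)
      ≤ (u-1) * (((m:ℝ)+1) * (((m:ℝ)+1) * T^(m+1)) * (u-1)) := mul_le_mul_of_nonneg_left h3 hu1
    _ = ((m:ℝ)+1)^2 * T^(m+1) * (u-1)^2 := by ring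

set_option maxHeartbeats 2000000

lemma keyDeriv (m : ℕ) (κ : ℝ) (hκ : 0 < κ) (h h' h'' : ℝ → ℝ) (hh : GoodH h h' h'')
    (r r' r'' : ℝ → ℝ) (hr : ModRadialSol (m+2) κ h' r r' r'')
    (R : ℝ) (hR : R ∈ Set.Ioo (0:ℝ) 1) :
    HasDerivAt (fun s => s * r' s / r s)
      (((1 * r' R + R * r'' R) * r R - R * r' R * r' R) / (r R)^2) R ∧
    (1 ≤ R * r' R / r R →
      |((1 * r' R + R * r'' R) * r R - R * r' R * r' R) / (r R)^2|
        ≤ κ*((m:ℝ)+1)*(((m:ℝ)+1)*(R * r' R / r R)^(m+2) - ((m:ℝ)+2)*(R * r' R / r R)^(m+1) + 1)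
              / (R * h'' (r' R * (r R / R)^(m+1)) * (r R / R)^(m+2))
            + (((m:ℝ)+2) * (R * r' R / r R) / R) * (R * r' R / r R - 1)) := by
  obtain ⟨hR0, hR1⟩ := hR
  have hRIoc : R ∈ Set.Ioc (0:ℝ) 1 := ⟨hR0, le_of_lt hR1⟩
  have hmem : Set.Ioc (0:ℝ) 1 ∈ 𝓝 R := Ioc_mem_nhds hR0 hR1
  have hrpos : 0 < r R := hr.pos R hRIoc
  have hqpos : 0 < r' R := hr.derivPos R hRIoc
  have hvpos : 0 < r R / R := div_pos hrpos hR0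
  have hδpos : 0 < r' R * (r R / R)^(m+1) := by positivity
  have hrd : HasDerivAt r (r' R) R := (hr.hasDeriv R hRIoc).hasDerivAt hmem
  have hr'd : HasDerivAt r' (r'' R) R := (hr.hasDeriv2 R hRIoc).hasDerivAt hmem
  -- the u-derivative
  have hud : HasDerivAt (fun s => s * r' s / r s)
      (((1 * r' R + R * r'' R) * r R - R * r' R * r' R) / (r R)^2) R :=
    ((hasDerivAt_id R).mul hr'd).div hrd hrpos.ne'
  refine ⟨hud, fun hU1 => ?_⟩
  -- chain rule for the equilibrium function
  have hv : HasDerivAt (fun s => r s / s) ((r' R * R - r R * 1)/R^2) R :=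
    hrd.div (hasDerivAt_id R) hR0.ne'
  have hvpow : HasDerivAt (fun s => (r s / s)^(m+1))
      ((((m+1:ℕ)):ℝ) * (r R / R)^(m+1-1) * ((r' R * R - r R * 1)/R^2)) R := hv.pow (m+1)
  have hδd : HasDerivAt (fun s => r' s * (r s / s)^(m+1))
      (r'' R * (r R / R)^(m+1)
        + r' R * ((((m+1:ℕ)):ℝ) * (r R / R)^(m+1-1) * ((r' R * R - r R * 1)/R^2))) R :=
    hr'd.mul hvpow
  have hH' : HasDerivAt (fun s => h' (r' s * (r s / s)^(m+1)))
      (h'' (r' R * (r R / R)^(m+1)) * (r'' R * (r R / R)^(m+1)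
        + r' R * ((((m+1:ℕ)):ℝ) * (r R / R)^(m+1-1) * ((r' R * R - r R * 1)/R^2)))) R :=
    (hh.deriv2 _ hδpos).comp R hδd
  have hlog : HasDerivAt (fun s => Real.log (r s / s))
      (((r' R * R - r R * 1)/R^2) / (r R / R)) R := hv.log hvpos.ne'
  have h1 : HasDerivAt (fun s => κ * (r' s)^(m+1))
      (κ * ((((m+1:ℕ)):ℝ) * (r' R)^(m+1-1) * r'' R)) R := (hr'd.pow (m+1)).const_mul κ
  have h2 : HasDerivAt (fun s => (r s / s)^(m+1) * h' (r' s * (r s / s)^(m+1)))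
      ((((m+1:ℕ)):ℝ) * (r R / R)^(m+1-1) * ((r' R * R - r R * 1)/R^2)
          * h' (r' R * (r R / R)^(m+1))
        + (r R / R)^(m+1) * (h'' (r' R * (r R / R)^(m+1)) * (r'' R * (r R / R)^(m+1)
            + r' R * ((((m+1:ℕ)):ℝ) * (r R / R)^(m+1-1) * ((r' R * R - r R * 1)/R^2))))) R :=
    hvpow.mul hH'
  have hlin : HasDerivAt (fun s => ((m:ℝ)+1)/((m:ℝ)+2) + ((m:ℝ)+1) * Real.log (r s / s))
      (((m:ℝ)+1) * (((r' R * R - r R * 1)/R^2) / (r R / R))) R :=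
    ((hlog.const_mul (((m:ℝ)+1))).const_add (((m:ℝ)+1)/((m:ℝ)+2)))
  have h3 : HasDerivAt (fun s => κ * ((r s / s)^(m+1) * (((m:ℝ)+1)/((m:ℝ)+2) + ((m:ℝ)+1) * Real.log (r s / s))))
      (κ * ((((m+1:ℕ)):ℝ) * (r R / R)^(m+1-1) * ((r' R * R - r R * 1)/R^2)
          * (((m:ℝ)+1)/((m:ℝ)+2) + ((m:ℝ)+1) * Real.log (r R / R))
        + (r R / R)^(m+1) * (((m:ℝ)+1) * (((r' R * R - r R * 1)/R^2) / (r R / R))))) R :=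
    (hvpow.mul hlin).const_mul κ
  have hsum := (h1.add h2).add h3
  have hpowR : HasDerivAt (fun s : ℝ => s^(m+1)) ((((m+1:ℕ)):ℝ) * R^(m+1-1)) R :=
    hasDerivAt_pow (m+1) R
  have hB := hpowR.mul hsum
  have hA0 := (hr.equil R hRIoc).hasDerivAt hmem
  have hFG : (fun s => s ^ (m+2-1) * PhiHat1 (m+2) κ h' (r' s) (r s / s))
      = (fun s => s^(m+1) * (κ * (r' s)^(m+1) + (r s / s)^(m+1) * h' (r' s * (r s / s)^(m+1))
          + κ * ((r s / s)^(m+1) * (((m:ℝ)+1)/((m:ℝ)+2) + ((m:ℝ)+1) * Real.log (r s / s))))) := by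
    funext s
    simp only [PhiHat1, show m+2-1 = m+1 by omega]
    push_cast
    ring
  have hA : HasDerivAt (fun s => s^(m+1) * (κ * (r' s)^(m+1) + (r s / s)^(m+1) * h' (r' s * (r s / s)^(m+1))
          + κ * ((r s / s)^(m+1) * (((m:ℝ)+1)/((m:ℝ)+2) + ((m:ℝ)+1) * Real.log (r s / s)))))
      ((((m+2):ℝ) - 1) * R ^ (m+2-2) * PhiHat2 (m+2) κ h' (r' R) (r R / R)) R := by
    rw [← hFG]; exact_mod_cast hA0
  have hm2 : ((m:ℝ)+2) ≠ 0 := by positivity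
  have hH2pos : 0 < h'' (r' R * (r R / R)^(m+1)) := hh.hpp_pos _ hδpos
  have hB2 : HasDerivAt (fun s => s^(m+1) * (κ * (r' s)^(m+1) + (r s / s)^(m+1) * h' (r' s * (r s / s)^(m+1))
          + κ * ((r s / s)^(m+1) * (((m:ℝ)+1)/((m:ℝ)+2) + ((m:ℝ)+1) * Real.log (r s / s)))))
      ((((m+2):ℝ) - 1) * R ^ (m+2-2) * PhiHat2 (m+2) κ h' (r' R) (r R / R)
        + (κ*((m:ℝ)+1)*(R*r' R)^m*(r' R + R*r'' R)*R^(m+2)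
            + (r R)^(m+1) * h'' (r' R * (r R / R)^(m+1))
                * (r'' R * (r R)^(m+1) * R + ((m:ℝ)+1) * r' R * (r R)^m * (r' R * R - r R))
            - κ*((m:ℝ)+1)*(r R)^(m+1)*R^(m+1)) / R^(m+2)) R := by
    refine hB.congr_deriv ?_
    have hrne : r R ≠ 0 := hrpos.ne'
    have hRne : R ≠ 0 := hR0.ne'
    simp only [Pi.add_apply, PhiHat2, show m+2-2 = m by omega, show m+2-1 = m+1 by omega, show m+1-1 = m by omega]
    push_cast
    simp only [div_pow]
    field_simp
    ring
  have hBA2 := hB2.unique hA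
  have hRp : R^(m+2) ≠ 0 := pow_ne_zero _ hR0.ne'
  have hzero : (κ*((m:ℝ)+1)*(R*r' R)^m*(r' R + R*r'' R)*R^(m+2)
            + (r R)^(m+1) * h'' (r' R * (r R / R)^(m+1))
                * (r'' R * (r R)^(m+1) * R + ((m:ℝ)+1) * r' R * (r R)^m * (r' R * R - r R))
            - κ*((m:ℝ)+1)*(r R)^(m+1)*R^(m+1)) = 0 := by
    have hD : (κ*((m:ℝ)+1)*(R*r' R)^m*(r' R + R*r'' R)*R^(m+2)
            + (r R)^(m+1) * h'' (r' R * (r R / R)^(m+1))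
                * (r'' R * (r R)^(m+1) * R + ((m:ℝ)+1) * r' R * (r R)^m * (r' R * R - r R))
            - κ*((m:ℝ)+1)*(r R)^(m+1)*R^(m+1)) / R^(m+2) = 0 := by linarith
    exact (div_eq_zero_iff.mp hD).resolve_right hRp
  have hDia2 : κ*((m:ℝ)+1)*(R*r' R)^m*(r' R + R*r'' R)*R^(m+2)
      + (r R)^(m+1) * h'' (r' R * (r R / R)^(m+1))
          * (r'' R * (r R)^(m+1) * R + ((m:ℝ)+1) * r' R * (r R)^m * (r' R * R - r R))
      = κ*((m:ℝ)+1)*(r R)^(m+1)*R^(m+1) := by linarith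
  -- polynomial form of the delta' identity
  have hI : ((r R)^(m+1)*(r R)^(m+1)*h'' (r' R * (r R / R)^(m+1)) + κ*((m:ℝ)+1)*(R*r' R)^m*R^(m+2))
        * (r'' R * (r R)^(m+1) * R + ((m:ℝ)+1) * r' R * (r R)^m * (r' R * R - r R))
      = κ*((m:ℝ)+1)*R^(m+1)*(r R)^m*((r R)^(m+2) - ((m:ℝ)+2)*R^(m+1)*(r' R)^(m+1)*(r R)
          + ((m:ℝ)+1)*R^(m+2)*(r' R)^(m+2)) := by
    linear_combination (r R)^(m+1) * hDia2
  have hGU : (r R)^(m+2) - ((m:ℝ)+2)*R^(m+1)*(r' R)^(m+1)*(r R) + ((m:ℝ)+1)*R^(m+2)*(r' R)^(m+2)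
      = (r R)^(m+2) * (((m:ℝ)+1)*(R * r' R / r R)^(m+2) - ((m:ℝ)+2)*(R * r' R / r R)^(m+1) + 1) := by
    have hrne : r R ≠ 0 := hrpos.ne'
    simp only [div_pow]
    field_simp
    ring
  have hGUpos : 0 ≤ ((m:ℝ)+1)*(R * r' R / r R)^(m+2) - ((m:ℝ)+2)*(R * r' R / r R)^(m+1) + 1 :=
    g_nonneg m _ hU1
  set Gu : ℝ := ((m:ℝ)+1)*(R * r' R / r R)^(m+2) - ((m:ℝ)+2)*(R * r' R / r R)^(m+1) + 1 with hGudef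
  rw [hGU] at hI
  have hH2ne : h'' (r' R * (r R / R)^(m+1)) ≠ 0 := ne_of_gt hH2pos
  have hK3pos : 0 < (r R)^(m+1)*(r R)^(m+1)*h'' (r' R * (r R / R)^(m+1)) + κ*((m:ℝ)+1)*(R*r' R)^m*R^(m+2) := by
    positivity
  have hNnonneg : (0:ℝ) ≤ κ*((m:ℝ)+1)*R^(m+1)*(r R)^m*((r R)^(m+2) * Gu) :=
    mul_nonneg (by positivity) (mul_nonneg (by positivity) hGUpos)
  have hDD2eq : (r'' R * (r R)^(m+1) * R + ((m:ℝ)+1) * r' R * (r R)^m * (r' R * R - r R))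
      = κ*((m:ℝ)+1)*R^(m+1)*(r R)^m*((r R)^(m+2) * Gu)
        / ((r R)^(m+1)*(r R)^(m+1)*h'' (r' R * (r R / R)^(m+1)) + κ*((m:ℝ)+1)*(R*r' R)^m*R^(m+2)) := by
    rw [eq_div_iff hK3pos.ne']
    linear_combination hI
  have hDD2nonneg : 0 ≤ r'' R * (r R)^(m+1) * R + ((m:ℝ)+1) * r' R * (r R)^m * (r' R * R - r R) := by
    rw [hDD2eq]; exact div_nonneg hNnonneg hK3pos.le
  have hPrev : (r R)^(m+1)*(r R)^(m+1)*h'' (r' R * (r R / R)^(m+1))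
        * (r'' R * (r R)^(m+1) * R + ((m:ℝ)+1) * r' R * (r R)^m * (r' R * R - r R))
      ≤ κ*((m:ℝ)+1)*R^(m+1)*(r R)^m*((r R)^(m+2) * Gu) := by
    have hextra : (0:ℝ) ≤ κ*((m:ℝ)+1)*(R*r' R)^m*R^(m+2) := by positivity
    nlinarith [hI, hDD2nonneg, hextra]
  have hb1 : (r'' R * (r R)^(m+1) * R + ((m:ℝ)+1) * r' R * (r R)^m * (r' R * R - r R))
      / (R^(m+2) * (r R / R)^(m+2))
      ≤ κ*((m:ℝ)+1)*Gu / (R * h'' (r' R * (r R / R)^(m+1)) * (r R / R)^(m+2)) := by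
    rw [div_le_div_iff₀ (by positivity) (by positivity)]
    calc (r'' R * (r R)^(m+1) * R + ((m:ℝ)+1) * r' R * (r R)^m * (r' R * R - r R))
          * (R * h'' (r' R * (r R / R)^(m+1)) * (r R / R)^(m+2))
        = ((r R)^(m+1)*(r R)^(m+1)*h'' (r' R * (r R / R)^(m+1))
            * (r'' R * (r R)^(m+1) * R + ((m:ℝ)+1) * r' R * (r R)^m * (r' R * R - r R)))
          * (R * (r R / R)^(m+2) / ((r R)^(m+1)*(r R)^(m+1))) := by
          field_simp
      _ ≤ (κ*((m:ℝ)+1)*R^(m+1)*(r R)^m*((r R)^(m+2) * Gu))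
          * (R * (r R / R)^(m+2) / ((r R)^(m+1)*(r R)^(m+1))) :=
          mul_le_mul_of_nonneg_right hPrev (by positivity)
      _ = κ*((m:ℝ)+1)*Gu * (R^(m+2) * (r R / R)^(m+2)) := by
          field_simp
          ring
  -- identity for ud
  have hud_eq : ((1 * r' R + R * r'' R) * r R - R * r' R * r' R) / (r R)^2
      = (r'' R * (r R)^(m+1) * R + ((m:ℝ)+1) * r' R * (r R)^m * (r' R * R - r R))
          / (R^(m+2) * (r R / R)^(m+2))
        - ((m:ℝ)+2) * (R * r' R / r R) * (R * r' R / r R - 1) / R := by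
    have hrne : r R ≠ 0 := hrpos.ne'
    have hRne : R ≠ 0 := hR0.ne'
    simp only [div_pow]
    field_simp
    ring
  rw [hud_eq]
  have hVp : (0:ℝ) < R^(m+2) * (r R / R)^(m+2) := by positivity
  have ht1 : (0:ℝ) ≤ (r'' R * (r R)^(m+1) * R + ((m:ℝ)+1) * r' R * (r R)^m * (r' R * R - r R))
      / (R^(m+2) * (r R / R)^(m+2)) := div_nonneg hDD2nonneg hVp.le
  have ht2 : (0:ℝ) ≤ ((m:ℝ)+2) * (R * r' R / r R) * (R * r' R / r R - 1) / R := by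
    apply div_nonneg _ hR0.le
    apply mul_nonneg (mul_nonneg (by positivity) (by linarith)) (by linarith)
  have habs : |(r'' R * (r R)^(m+1) * R + ((m:ℝ)+1) * r' R * (r R)^m * (r' R * R - r R))
          / (R^(m+2) * (r R / R)^(m+2))
        - ((m:ℝ)+2) * (R * r' R / r R) * (R * r' R / r R - 1) / R|
      ≤ (r'' R * (r R)^(m+1) * R + ((m:ℝ)+1) * r' R * (r R)^m * (r' R * R - r R))
          / (R^(m+2) * (r R / R)^(m+2))
        + ((m:ℝ)+2) * (R * r' R / r R) * (R * r' R / r R - 1) / R := by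
    rw [abs_le]
    constructor <;> linarith
  refine le_trans habs ?_
  have : ((m:ℝ)+2) * (R * r' R / r R) * (R * r' R / r R - 1) / R = (((m:ℝ)+2) * (R * r' R / r R) / R) * (R * r' R / r R - 1) := by ring
  linarith [hb1]


lemma stress_deriv (m : ℕ) (κ : ℝ) (h' : ℝ → ℝ) (r r' r'' : ℝ → ℝ)
    (hr : ModRadialSol (m+2) κ h' r r' r'') (R : ℝ) (hR : R ∈ Set.Ioc (0:ℝ) 1) :
    HasDerivWithinAt (fun s => THat (m+2) κ h' (r' s) (r s / s))
      ((((m+2:ℕ):ℝ) - 1) * κ * (r' R / r R) * (1 - (r' R) ^ (m+2-1) / (r R / R) ^ (m+2-1)))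
      (Set.Ioc 0 1) R := by
  have hR0 : (0:ℝ) < R := hR.1
  have hrpos : 0 < r R := hr.pos R hR
  have hEq : Set.EqOn (fun s => s ^ (m + 2 - 1) * PhiHat1 (m+2) κ h' (r' s) (r s / s))
      (fun s => (r s) ^ (m+1) * THat (m+2) κ h' (r' s) (r s / s)) (Set.Ioc 0 1) := by
    intro s hs
    have hs0 : (s:ℝ) ≠ 0 := ne_of_gt hs.1
    have hrs : r s ≠ 0 := (hr.pos s hs).ne'
    simp only [PhiHat1, THat, show m+2-1 = m+1 by omega]
    have hn2 : ((m+2:ℕ):ℝ) ≠ 0 := by positivity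
    simp only [div_pow]
    field_simp
  have hG : HasDerivWithinAt (fun s => (r s) ^ (m+1) * THat (m+2) κ h' (r' s) (r s / s))
      ((((m+2:ℕ) : ℝ) - 1) * R ^ (m + 2 - 2) * PhiHat2 (m+2) κ h' (r' R) (r R / R)) (Set.Ioc 0 1) R :=
    (hr.equil R hR).congr (fun y hy => (hEq hy).symm) (hEq hR).symm
  have hpow : HasDerivWithinAt (fun s => (r s) ^ (m+1))
      (((m+1 : ℕ):ℝ) * (r R) ^ (m + 1 - 1) * r' R) (Set.Ioc 0 1) R := (hr.hasDeriv R hR).pow (m+1)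
  have hne : (r R) ^ (m+1) ≠ 0 := pow_ne_zero _ hrpos.ne'
  have hdiv := hG.div hpow hne
  have hEq2 : Set.EqOn (fun s => ((r s) ^ (m+1) * THat (m+2) κ h' (r' s) (r s / s)) / (r s) ^ (m+1))
      (fun s => THat (m+2) κ h' (r' s) (r s / s)) (Set.Ioc 0 1) := by
    intro s hs
    have hrs : (r s) ^ (m+1) ≠ 0 := pow_ne_zero _ (hr.pos s hs).ne'
    exact mul_div_cancel_left₀ _ hrs
  refine (hdiv.congr (fun y hy => (hEq2 hy).symm) (hEq2 hR).symm).congr_deriv ?_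
  have hm2 : ((m:ℝ)+2) ≠ 0 := by positivity
  simp only [PhiHat2, THat]
  push_cast
  have hrne : r R ≠ 0 := hrpos.ne'
  have hRne : R ≠ 0 := hR0.ne'
  simp only [div_pow]
  field_simp
  ring


lemma uLeOne (m : ℕ) (κ : ℝ) (hκ : 0 < κ) (h h' h'' : ℝ → ℝ) (hh : GoodH h h' h'')
    (r r' r'' : ℝ → ℝ) (hr : ModRadialSol (m+2) κ h' r r' r'')
    (hrc : ContinuousOn r (Set.Icc 0 1)) (hr0 : 0 < r 0)
    (M : ℝ) (hM : ∀ R ∈ Set.Ioc (0:ℝ) 1, r' R * (r R / R) ^ (m+1) ≤ M) :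
    ∀ R ∈ Set.Ioc (0:ℝ) 1, R * r' R / r R ≤ 1 := by
  have hrcont : ContinuousOn r (Set.Ioc 0 1) := fun x hx => (hr.hasDeriv x hx).continuousWithinAt
  have hr'cont : ContinuousOn r' (Set.Ioc 0 1) := fun x hx => (hr.hasDeriv2 x hx).continuousWithinAt
  have hucont : ContinuousOn (fun t => t * r' t / r t) (Set.Ioc 0 1) :=
    (continuousOn_id.mul hr'cont).div hrcont (fun x hx => (hr.pos x hx).ne')
  by_contra hcon
  push_neg at hcon
  obtain ⟨R₀, hR₀mem, hR₀u⟩ := hcon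
  obtain ⟨hR₀0, hR₀1⟩ := hR₀mem
  -- a small radius where u < 1
  have h0m : (0:ℝ) ∈ Set.Icc (0:ℝ) 1 := by constructor <;> norm_num
  have hc0 : ContinuousWithinAt r (Set.Icc 0 1) 0 := hrc 0 h0m
  rw [Metric.continuousWithinAt_iff] at hc0
  obtain ⟨ε, hε, hball⟩ := hc0 (r 0 / 2) (by linarith)
  have hM₁pos : (0:ℝ) < max M 1 := lt_of_lt_of_le one_pos (le_max_right _ _)
  set Rs : ℝ := min (min (ε/2) (R₀/2)) (r 0 / (2 * (max M 1 + 1))) with hRsdef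
  have hRspos : 0 < Rs := by
    apply lt_min (lt_min (by linarith) (by linarith))
    exact div_pos hr0 (by linarith)
  have hRsR₀ : Rs < R₀ :=
    lt_of_le_of_lt (le_trans (min_le_left _ _) (min_le_right _ _)) (by linarith)
  have hRs1 : Rs ≤ 1 := le_trans hRsR₀.le hR₀1
  have hRsIoc : Rs ∈ Set.Ioc (0:ℝ) 1 := ⟨hRspos, hRs1⟩
  have hrRs : r 0 / 2 < r Rs := by
    have hd : dist Rs 0 < ε := by
      rw [Real.dist_eq, sub_zero, abs_of_pos hRspos]
      exact lt_of_le_of_lt (le_trans (min_le_left _ _) (min_le_left _ _)) (by linarith)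
    have h2 := hball ⟨hRspos.le, hRs1⟩ hd
    rw [Real.dist_eq] at h2
    obtain ⟨ha, hb⟩ := abs_lt.mp h2
    linarith
  have hvRs : max M 1 + 1 ≤ r Rs / Rs := by
    rw [le_div_iff₀ hRspos]
    have h1 : Rs ≤ r 0 / (2*(max M 1 + 1)) := min_le_right _ _
    calc (max M 1 + 1) * Rs ≤ (max M 1 + 1) * (r 0 / (2*(max M 1 + 1))) :=
          mul_le_mul_of_nonneg_left h1 (by linarith)
      _ = r 0 / 2 := by
          have hMne : max M 1 + 1 ≠ 0 := by linarith
          field_simp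
      _ ≤ r Rs := hrRs.le
  have huRs : Rs * r' Rs / r Rs < 1 := by
    have hrRspos : 0 < r Rs := hr.pos Rs hRsIoc
    have hq : 0 < r' Rs := hr.derivPos Rs hRsIoc
    have hv : 0 < r Rs / Rs := div_pos hrRspos hRspos
    have hδM := hM Rs hRsIoc
    have hu_eq : Rs * r' Rs / r Rs = (r' Rs * (r Rs / Rs)^(m+1)) / (r Rs / Rs)^(m+2) := by
      have hRsne : Rs ≠ 0 := hRspos.ne'
      simp only [div_pow]
      field_simp
      ring
    rw [hu_eq, div_lt_one (pow_pos hv _)]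
    have hvg1 : (1:ℝ) ≤ r Rs / Rs := by linarith
    calc r' Rs * (r Rs/Rs)^(m+1) ≤ M := hδM
      _ ≤ max M 1 := le_max_left M 1
      _ < max M 1 + 1 := by linarith
      _ ≤ r Rs / Rs := hvRs
      _ ≤ (r Rs / Rs)^(m+2) := le_self_pow₀ hvg1 (by omega)
  -- the last point before R₀ where u ≤ 1
  set S : Set ℝ := Set.Icc Rs R₀ ∩ (fun t => t * r' t / r t) ⁻¹' (Set.Iic 1) with hSdef
  have hIccsub : Set.Icc Rs R₀ ⊆ Set.Ioc 0 1 :=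
    fun x hx => ⟨lt_of_lt_of_le hRspos hx.1, le_trans hx.2 hR₀1⟩
  have hSclosed : IsClosed S :=
    (hucont.mono hIccsub).preimage_isClosed_of_isClosed isClosed_Icc isClosed_Iic
  have hRsS : Rs ∈ S := ⟨⟨le_refl _, hRsR₀.le⟩, le_of_lt huRs⟩
  have hSbdd : BddAbove S := ⟨R₀, fun t ht => ht.1.2⟩
  set R₁ := sSup S with hR₁def
  have hR₁S : R₁ ∈ S := hSclosed.csSup_mem ⟨Rs, hRsS⟩ hSbdd
  have hR₁Icc := hR₁S.1
  have hR₁u : R₁ * r' R₁ / r R₁ ≤ 1 := hR₁S.2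
  have hR₁ne : R₁ ≠ R₀ := by
    intro he
    rw [he] at hR₁u
    exact absurd hR₁u (not_le.mpr hR₀u)
  have hR₁lt : R₁ < R₀ := lt_of_le_of_ne hR₁Icc.2 hR₁ne
  have hR₁pos : 0 < R₁ := lt_of_lt_of_le hRspos hR₁Icc.1
  have hR₁lt1 : R₁ < 1 := lt_of_lt_of_le hR₁lt hR₀1
  have hgt : ∀ t ∈ Set.Ioc R₁ R₀, 1 < t * r' t / r t := by
    intro t ht
    by_contra hle
    push_neg at hle
    have htS : t ∈ S := ⟨⟨le_trans hR₁Icc.1 ht.1.le, ht.2⟩, hle⟩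
    exact absurd (le_csSup hSbdd htS) (not_le.mpr ht.1)
  have huR₁ : R₁ * r' R₁ / r R₁ = 1 := by
    refine le_antisymm hR₁u ?_
    have hca : ContinuousAt (fun t => t * r' t / r t) R₁ :=
      hucont.continuousAt (Ioc_mem_nhds hR₁pos hR₁lt1)
    have htl : Tendsto (fun t => t * r' t / r t) (nhdsWithin R₁ (Set.Ioi R₁))
        (nhds (R₁ * r' R₁ / r R₁)) := hca.tendsto.mono_left nhdsWithin_le_nhds
    refine ge_of_tendsto htl ?_
    filter_upwards [Ioc_mem_nhdsGT hR₁lt] with t ht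
    exact (hgt t ht).le
  -- constants on the compact interval [R₁, R₀]
  have hJsub : Set.Icc R₁ R₀ ⊆ Set.Ioc 0 1 :=
    fun x hx => ⟨lt_of_lt_of_le hR₁pos hx.1, le_trans hx.2 hR₀1⟩
  have hJne : (Set.Icc R₁ R₀).Nonempty := ⟨R₁, le_refl _, hR₁lt.le⟩
  have hucJ : ContinuousOn (fun t => t * r' t / r t) (Set.Icc R₁ R₀) := hucont.mono hJsub
  obtain ⟨tT, htT, hTmax'⟩ := isCompact_Icc.exists_isMaxOn hJne hucJ
  rw [isMaxOn_iff] at hTmax'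
  have hTmax := hTmax'
  set T := tT * r' tT / r tT with hTdef
  have hT1 : 1 < T := lt_of_lt_of_le hR₀u (hTmax R₀ ⟨hR₁lt.le, le_refl _⟩)
  have hT0 : (0:ℝ) < T := by linarith
  have hδcont : ContinuousOn (fun t => r' t * (r t / t)^(m+1)) (Set.Ioc 0 1) :=
    hr'cont.mul ((hrcont.div continuousOn_id fun x hx => ne_of_gt hx.1).pow _)
  have hδpos : ∀ t ∈ Set.Ioc (0:ℝ) 1, 0 < r' t * (r t / t)^(m+1) := by
    intro t ht
    have h1 := hr.derivPos t ht
    have h2 := hr.pos t ht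
    exact mul_pos h1 (pow_pos (div_pos h2 ht.1) _)
  have hφcont : ContinuousOn (fun t => h'' (r' t * (r t / t)^(m+1))) (Set.Icc R₁ R₀) := by
    apply hh.cont2.comp (hδcont.mono hJsub)
    intro t ht
    exact hδpos t (hJsub ht)
  obtain ⟨t2, ht2, hφmin'⟩ := isCompact_Icc.exists_isMinOn hJne hφcont
  rw [isMinOn_iff] at hφmin'
  have hφmin := hφmin'
  have hH2mpos : 0 < h'' (r' t2 * (r t2 / t2)^(m+1)) := hh.hpp_pos _ (hδpos t2 (hJsub ht2))
  have hvcont : ContinuousOn (fun t => r t / t) (Set.Icc R₁ R₀) :=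
    (hrcont.div continuousOn_id fun x hx => ne_of_gt hx.1).mono hJsub
  obtain ⟨tv, htv, hvmin'⟩ := isCompact_Icc.exists_isMinOn hJne hvcont
  rw [isMinOn_iff] at hvmin'
  have hvmin := hvmin'
  have hvmpos : 0 < r tv / tv := div_pos (hr.pos tv (hJsub htv)) (hJsub htv).1
  -- Gronwall setup
  set H2m := h'' (r' t2 * (r t2 / t2)^(m+1)) with hH2mdef
  set vm := r tv / tv with hvmdef
  set K : ℝ := κ*((m:ℝ)+1)^3*T^(m+1)*(T-1)/(R₁ * H2m * vm^(m+2)) + ((m:ℝ)+2)*T/R₁ with hKdef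
  have hkey : ∀ t ∈ Set.Ico R₁ R₀, t ∈ Set.Ioo (0:ℝ) 1 := by
    intro t ht
    exact ⟨lt_of_lt_of_le hR₁pos ht.1, lt_of_lt_of_le ht.2 hR₀1⟩
  have hf' : ∀ t ∈ Set.Ico R₁ R₀,
      HasDerivWithinAt (fun t => t * r' t / r t - 1)
        (((1 * r' t + t * r'' t) * r t - t * r' t * r' t) / (r t)^2) (Set.Ici t) t := by
    intro t ht
    exact (((keyDeriv m κ hκ h h' h'' hh r r' r'' hr t (hkey t ht)).1).sub_const 1).hasDerivWithinAt
  have hfcont : ContinuousOn (fun t => t * r' t / r t - 1) (Set.Icc R₁ R₀) :=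
    hucJ.sub continuousOn_const
  have hfa : ‖R₁ * r' R₁ / r R₁ - 1‖ ≤ 0 := by
    rw [huR₁]
    simp
  have hbound : ∀ t ∈ Set.Ico R₁ R₀,
      ‖((1 * r' t + t * r'' t) * r t - t * r' t * r' t) / (r t)^2‖
        ≤ K * ‖t * r' t / r t - 1‖ + 0 := by
    intro t ht
    have htJ : t ∈ Set.Icc R₁ R₀ := ⟨ht.1, ht.2.le⟩
    have htIoc := hJsub htJ
    have ht0 : 0 < t := htIoc.1
    have hu1 : 1 ≤ t * r' t / r t := by
      rcases eq_or_lt_of_le ht.1 with he | hlt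
      · rw [← he]; exact le_of_eq huR₁.symm
      · exact (hgt t ⟨hlt, ht.2.le⟩).le
    have huT : t * r' t / r t ≤ T := hTmax t htJ
    have hb := (keyDeriv m κ hκ h h' h'' hh r r' r'' hr t (hkey t ht)).2 hu1
    rw [Real.norm_eq_abs, Real.norm_eq_abs, add_zero]
    have hft : |t * r' t / r t - 1| = t * r' t / r t - 1 := abs_of_nonneg (by linarith)
    rw [hft]
    refine le_trans hb ?_
    -- bound the two summands
    have hG2 : ((m:ℝ)+1)*(t * r' t / r t)^(m+2) - ((m:ℝ)+2)*(t * r' t / r t)^(m+1) + 1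
        ≤ ((m:ℝ)+1)^2*T^(m+1)*(T-1)*(t * r' t / r t - 1) := by
      nlinarith [g_le m (t * r' t / r t) T hu1 huT,
        mul_nonneg (mul_nonneg (mul_nonneg (by positivity : (0:ℝ) ≤ ((m:ℝ)+1)^2) (pow_nonneg hT0.le (m+1)))
          (by linarith : (0:ℝ) ≤ t * r' t / r t - 1)) (by linarith : (0:ℝ) ≤ T - (t * r' t / r t))]
    have hnum : κ*((m:ℝ)+1)*(((m:ℝ)+1)*(t * r' t / r t)^(m+2) - ((m:ℝ)+2)*(t * r' t / r t)^(m+1) + 1)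
        ≤ κ*((m:ℝ)+1)^3*T^(m+1)*(T-1)*(t * r' t / r t - 1) := by
      calc κ*((m:ℝ)+1)*(((m:ℝ)+1)*(t * r' t / r t)^(m+2) - ((m:ℝ)+2)*(t * r' t / r t)^(m+1) + 1)
          ≤ κ*((m:ℝ)+1)*(((m:ℝ)+1)^2*T^(m+1)*(T-1)*(t * r' t / r t - 1)) :=
            mul_le_mul_of_nonneg_left hG2 (mul_nonneg hκ.le (by positivity))
        _ = κ*((m:ℝ)+1)^3*T^(m+1)*(T-1)*(t * r' t / r t - 1) := by ring
    have hden : R₁ * H2m * vm^(m+2) ≤ t * h'' (r' t * (r t / t)^(m+1)) * (r t / t)^(m+2) := by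
      have h1 : R₁ ≤ t := ht.1
      have h2 : H2m ≤ h'' (r' t * (r t / t)^(m+1)) := hφmin t htJ
      have h3 : vm ≤ r t / t := hvmin t htJ
      have h4 : vm^(m+2) ≤ (r t / t)^(m+2) := pow_le_pow_left₀ hvmpos.le h3 _
      exact mul_le_mul (mul_le_mul h1 h2 hH2mpos.le ht0.le) h4 (pow_nonneg hvmpos.le _)
        (mul_nonneg ht0.le (le_trans hH2mpos.le h2))
    have hb1 : κ*((m:ℝ)+1)*(((m:ℝ)+1)*(t * r' t / r t)^(m+2) - ((m:ℝ)+2)*(t * r' t / r t)^(m+1) + 1)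
          / (t * h'' (r' t * (r t / t)^(m+1)) * (r t / t)^(m+2))
        ≤ κ*((m:ℝ)+1)^3*T^(m+1)*(T-1)/(R₁ * H2m * vm^(m+2)) * (t * r' t / r t - 1) := by
      have hd1 : (0:ℝ) < R₁ * H2m * vm^(m+2) :=
        mul_pos (mul_pos hR₁pos hH2mpos) (pow_pos hvmpos _)
      have := div_le_div₀ (mul_nonneg (mul_nonneg (mul_nonneg (mul_nonneg hκ.le (by positivity))
        (pow_nonneg hT0.le _)) (by linarith)) (by linarith)) hnum hd1 hden
      refine le_trans this (le_of_eq ?_)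
      ring
    have hb2 : ((m:ℝ)+2) * (t * r' t / r t) / t * (t * r' t / r t - 1)
        ≤ ((m:ℝ)+2)*T/R₁ * (t * r' t / r t - 1) := by
      apply mul_le_mul_of_nonneg_right _ (by linarith)
      apply div_le_div₀ (mul_nonneg (by positivity) hT0.le)
        (mul_le_mul_of_nonneg_left huT (by positivity)) hR₁pos ht.1
    have hsplit : K * (t * r' t / r t - 1)
        = κ*((m:ℝ)+1)^3*T^(m+1)*(T-1)/(R₁ * H2m * vm^(m+2)) * (t * r' t / r t - 1)
          + ((m:ℝ)+2)*T/R₁ * (t * r' t / r t - 1) := by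
      rw [hKdef]; ring
    linarith
  have hg := norm_le_gronwallBound_of_norm_deriv_right_le hfcont hf' hfa hbound R₀
    ⟨hR₁lt.le, le_refl R₀⟩
  rw [gronwallBound_ε0_δ0] at hg
  rw [Real.norm_eq_abs] at hg
  have := le_trans (le_abs_self _) hg
  linarith

/-- along a solution of the modified equilibrium equation, the modified
Cauchy stress `T̂(r(·))` is `C¹` with
`(d/dR)T̂(r(R)) = (n−1)κ (r'/r)(1 − (r')^{n−1}/(r/R)^{n−1})`; in particular it is
monotone increasing for a cavitating solution. -/
theorem stmt13 (n : ℕ) (hn : 2 ≤ n) (κ : ℝ) (hκ : 0 < κ)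
    (h h' h'' : ℝ → ℝ) (hh : GoodH h h' h'')
    (r r' r'' : ℝ → ℝ) (hr : ModRadialSol n κ h' r r' r'') :
    (∀ R ∈ Set.Ioc (0:ℝ) 1,
      HasDerivWithinAt (fun s => THat n κ h' (r' s) (r s / s))
        (((n:ℝ) - 1) * κ * (r' R / r R) * (1 - (r' R) ^ (n - 1) / (r R / R) ^ (n - 1)))
        (Set.Ioc 0 1) R) ∧
    ContinuousOn (fun R => ((n:ℝ) - 1) * κ * (r' R / r R) *
        (1 - (r' R) ^ (n - 1) / (r R / R) ^ (n - 1))) (Set.Ioc 0 1) ∧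
    (ContinuousOn r (Set.Icc 0 1) → 0 < r 0 →
      (∃ M : ℝ, ∀ R ∈ Set.Ioc (0:ℝ) 1, del n r r' R ≤ M) →
      MonotoneOn (fun R => THat n κ h' (r' R) (r R / R)) (Set.Ioc 0 1)) := by
  obtain ⟨m, rfl⟩ : ∃ m, n = m + 2 := ⟨n - 2, by omega⟩
  have hrcont : ContinuousOn r (Set.Ioc 0 1) := fun x hx => (hr.hasDeriv x hx).continuousWithinAt
  have hr'cont : ContinuousOn r' (Set.Ioc 0 1) := fun x hx => (hr.hasDeriv2 x hx).continuousWithinAt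
  refine ⟨fun R hR => stress_deriv m κ h' r r' r'' hr R hR, ?_, ?_⟩
  · -- continuity of the derivative
    apply ContinuousOn.mul
    · exact (continuousOn_const.mul continuousOn_const).mul
        (hr'cont.div hrcont fun x hx => (hr.pos x hx).ne')
    · apply continuousOn_const.sub
      apply (hr'cont.pow _).div
        ((hrcont.div continuousOn_id fun x hx => ne_of_gt hx.1).pow _)
      intro x hx
      exact pow_ne_zero _ (div_pos (hr.pos x hx) hx.1).ne'
  · -- monotonicity
    intro hrc hr0 ⟨M, hM⟩
    have hM' : ∀ R ∈ Set.Ioc (0:ℝ) 1, r' R * (r R / R) ^ (m+1) ≤ M := by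
      intro R hR
      have := hM R hR
      simpa [del, show m+2-1 = m+1 by omega] using this
    have hU := uLeOne m κ hκ h h' h'' hh r r' r'' hr hrc hr0 M hM'
    apply monotoneOn_of_deriv_nonneg (convex_Ioc 0 1)
    · exact fun x hx => (stress_deriv m κ h' r r' r'' hr x hx).continuousWithinAt
    · rw [interior_Ioc]
      intro x hx
      exact ((stress_deriv m κ h' r r' r'' hr x ⟨hx.1, hx.2.le⟩).hasDerivAt
        (Ioc_mem_nhds hx.1 hx.2)).differentiableAt.differentiableWithinAt
    · rw [interior_Ioc]
      intro x hx
      have hxIoc : x ∈ Set.Ioc (0:ℝ) 1 := ⟨hx.1, hx.2.le⟩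
      have hd := (stress_deriv m κ h' r r' r'' hr x hxIoc).hasDerivAt (Ioc_mem_nhds hx.1 hx.2)
      rw [hd.deriv]
      have hq := hr.derivPos x hxIoc
      have hrp := hr.pos x hxIoc
      have hu := hU x hxIoc
      have hqv : r' x ≤ r x / x := by
        rw [le_div_iff₀ hx.1]
        have := (div_le_one hrp).mp hu
        linarith [this]
      have hvpow : 0 < (r x / x)^(m+2-1) := pow_pos (div_pos hrp hx.1) _
      apply mul_nonneg (mul_nonneg (mul_nonneg ?_ hκ.le) (div_nonneg hq.le hrp.le))
      · rw [sub_nonneg, div_le_one hvpow]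
        exact pow_le_pow_left₀ hq.le hqv _
      · push_cast
        linarith

end
end
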